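/- arXiv:2505.10090 — 7 statements merged into one kernel-verified Lean document; each statement's English description precedes it below -/
import Mathlib

section
/- Let p be an odd prime and α a positive integer, and set n = p^α. Then the Sombor index of Cl₂(ℤ_n) equals ((φ(n) − 2)/2) · √2, where φ is Euler's totient function. -/
lemma helper_int {p : ℕ} (hp : p.Prime) (α : ℕ) {a b : ℤ} (h : ((p:ℤ))^α ∣ a * b)
    (ha : ¬ (p:ℤ) ∣ a) : ((p:ℤ))^α ∣ b :=
  (((Nat.prime_iff_prime_int.mp hp).coprime_iff_not_dvd.mpr ha).pow_left).dvd_of_dvd_mul_left h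

section
variable {p : ℕ} {α : ℕ} [NeZero (p^α)]

lemma zmod_cast_val (x : ZMod (p^α)) : (((x.val : ℤ)) : ZMod (p^α)) = x := by
  push_cast; simp [ZMod.natCast_val, ZMod.cast_id]

lemma zmod_dvd' {x : ZMod (p^α)} (h : ((p:ℤ))^α ∣ (x.val : ℤ)) : x = 0 := by
  have := (ZMod.intCast_zmod_eq_zero_iff_dvd (x.val : ℤ) (p^α)).mpr (by push_cast; exact h)
  rwa [zmod_cast_val] at this

lemma zmod_factor (hp : p.Prime) {x y : ZMod (p^α)} (h : x * y = 0)
    (hnot : ¬ ((p:ℤ) ∣ (x.val : ℤ) ∧ (p:ℤ) ∣ (y.val : ℤ))) : x = 0 ∨ y = 0 := by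
  set a : ℤ := (x.val : ℤ)
  set b : ℤ := (y.val : ℤ)
  have hab : ((p:ℤ))^α ∣ a * b := by
    have h0 : (((a * b : ℤ)) : ZMod (p^α)) = 0 := by
      push_cast
      rw [zmod_cast_val, zmod_cast_val, h]
    have := (ZMod.intCast_zmod_eq_zero_iff_dvd (a*b) (p^α)).mp h0
    push_cast at this; exact this
  by_cases hda : (p:ℤ) ∣ a
  · have hdb : ¬ (p:ℤ) ∣ b := fun hh => hnot ⟨hda, hh⟩
    exact Or.inl (zmod_dvd' (helper_int hp α (mul_comm a b ▸ hab) hdb))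
  · exact Or.inr (zmod_dvd' (helper_int hp α hab hda))

lemma zmod_sq_roots (hp : p.Prime) (hodd : p ≠ 2) (hα : 0 < α) {x : ZMod (p^α)}
    (h : (x - 1) * (x + 1) = 0) : x = 1 ∨ x = -1 := by
  have hppa : (p:ℤ) ∣ (p:ℤ)^α := dvd_pow_self _ hα.ne'
  have := zmod_factor hp h ?_
  · rcases this with h1 | h1
    · exact Or.inl (by linear_combination h1)
    · exact Or.inr (by linear_combination h1)
  · rintro ⟨h1, h2⟩
    set a : ℤ := ((x-1).val : ℤ)
    set b : ℤ := ((x+1).val : ℤ)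
    have hba : (((b - a - 2 : ℤ)) : ZMod (p^α)) = 0 := by
      push_cast
      rw [zmod_cast_val, zmod_cast_val]; ring
    have h4 := (ZMod.intCast_zmod_eq_zero_iff_dvd _ _).mp hba
    push_cast at h4
    have h5 : (p:ℤ) ∣ 2 := by
      have h6 : (2:ℤ) = (b - a) - (b - a - 2) := by ring
      rw [h6]
      exact dvd_sub (dvd_sub h2 h1) (hppa.trans h4)
    have : p ∣ 2 := by exact_mod_cast h5
    exact hodd ((Nat.prime_dvd_prime_iff_eq hp Nat.prime_two).mp this)

lemma zmod_idem (hp : p.Prime) (hα : 0 < α) {x : ZMod (p^α)} (hx : x * x = x)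
    (hx0 : x ≠ 0) : x = 1 := by
  have h : (x - 1) * x = 0 := by linear_combination hx
  have := zmod_factor hp h ?_
  · rcases this with h1 | h1
    · linear_combination h1
    · exact absurd h1 hx0
  · rintro ⟨h1, h2⟩
    set a : ℤ := ((x-1).val : ℤ)
    set b : ℤ := (x.val : ℤ)
    have hba : (((b - a - 1 : ℤ)) : ZMod (p^α)) = 0 := by
      push_cast
      rw [zmod_cast_val, zmod_cast_val]; ring
    have h4 := (ZMod.intCast_zmod_eq_zero_iff_dvd _ _).mp hba
    push_cast at h4
    have h5 : (p:ℤ) ∣ 1 := by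
      have h6 : (1:ℤ) = (b - a) - (b - a - 1) := by ring
      rw [h6]
      exact dvd_sub (dvd_sub h2 h1) ((dvd_pow_self _ hα.ne').trans h4)
    have : p ∣ 1 := by exact_mod_cast h5
    exact hp.one_lt.ne' (Nat.dvd_one.mp this)

lemma zmod_two_ne_zero (hp : p.Prime) (hodd : p ≠ 2) (hα : 0 < α) : (2 : ZMod (p^α)) ≠ 0 := by
  intro h
  have h2 : ((2:ℕ) : ZMod (p^α)) = 0 := by exact_mod_cast h
  have := (ZMod.natCast_eq_zero_iff 2 (p^α)).mp h2
  have hpd : p ∣ 2 := (dvd_pow_self p hα.ne').trans this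
  exact hodd ((Nat.prime_dvd_prime_iff_eq hp Nat.prime_two).mp hpd)

lemma zmod_units_inv_eq_self_iff (hp : p.Prime) (hodd : p ≠ 2) (hα : 0 < α)
    (u : (ZMod (p^α))ˣ) : u⁻¹ = u ↔ u = 1 ∨ u = -1 := by
  constructor
  · intro h
    have hu : (u : ZMod (p^α)) * (u : ZMod (p^α)) = 1 := by
      have := inv_eq_iff_mul_eq_one.mp h
      have := congrArg (Units.val) this
      simpa using this
    have hfac : ((u : ZMod (p^α)) - 1) * ((u : ZMod (p^α)) + 1) = 0 := by
      linear_combination hu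
    rcases zmod_sq_roots hp hodd hα hfac with h1 | h1
    · exact Or.inl (Units.ext (by simpa using h1))
    · exact Or.inr (Units.ext (by simpa using h1))
  · rintro (rfl | rfl)
    · simp
    · simp

end

/-- The clean graph `Cl₂(R)`: vertices are pairs `(e, u)` where `e` is a nonzero
idempotent of `R` and `u` is a unit of `R`; two distinct vertices `(e, u)` and
`(f, v)` are adjacent iff `e * f = 0` or `u * v = 1`. -/
def Cl2 (R : Type*) [CommRing R] :
    SimpleGraph ({e : R // IsIdempotentElem e ∧ e ≠ 0} × Rˣ) where
  Adj v w := v ≠ w ∧ (((v.1 : R) * (w.1 : R) = 0) ∨ ((v.2 : R) * (w.2 : R) = 1))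
  symm := by
    constructor
    rintro v w ⟨hne, h⟩
    refine ⟨hne.symm, ?_⟩
    rcases h with h | h
    · left; rwa [mul_comm]
    · right; rwa [mul_comm]
  loopless := by constructor; rintro v ⟨h, -⟩; exact h rfl

/-- The Sombor index of a graph: the sum over edges `uv` of
`√(deg(u)² + deg(v)²)`. -/
noncomputable def somborIndex {V : Type*} (G : SimpleGraph V) : ℝ :=
  ∑ᶠ e ∈ G.edgeSet,
    Sym2.lift
      ⟨fun u v =>
        Real.sqrt (((G.neighborSet u).ncard : ℝ) ^ 2 + ((G.neighborSet v).ncard : ℝ) ^ 2),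
        fun u v => by simp [add_comm]⟩ e

theorem sombor_prime_power (p : ℕ) (hp : p.Prime) (hodd : p ≠ 2) (α : ℕ) (hα : 0 < α)
    (n : ℕ) (hn : n = p ^ α) :
    somborIndex (Cl2 (ZMod n)) = ((n.totient : ℝ) - 2) / 2 * Real.sqrt 2 := by
  subst hn
  haveI : NeZero (p ^ α) := ⟨pow_ne_zero _ hp.pos.ne'⟩
  classical
  set R := ZMod (p ^ α) with hR
  -- basic facts
  have h2ne : (2 : R) ≠ 0 := zmod_two_ne_zero hp hodd hα
  have h1ne : (1 : R) ≠ 0 := by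
    intro h
    exact h2ne (by rw [show (2:R) = 1 + 1 by ring, h]; ring)
  haveI : Nontrivial R := ⟨1, 0, h1ne⟩
  -- idempotent subtype is trivial
  have hsub : ∀ v : {e : R // IsIdempotentElem e ∧ e ≠ 0}, (v : R) = 1 :=
    fun v => zmod_idem hp hα v.2.1 v.2.2
  have hfst : ∀ v w : {e : R // IsIdempotentElem e ∧ e ≠ 0}, v = w :=
    fun v w => Subtype.ext ((hsub v).trans (hsub w).symm)
  have hminus : (-1 : Rˣ) ≠ 1 := by
    intro h
    have := congrArg (Units.val) h
    simp only [Units.val_neg, Units.val_one] at this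
    exact h2ne (by linear_combination -this)
  -- adjacency characterization
  have hadj : ∀ v w : ({e : R // IsIdempotentElem e ∧ e ≠ 0} × Rˣ),
      (Cl2 R).Adj v w ↔ (v.2 ≠ w.2 ∧ w.2 = v.2⁻¹) := by
    intro v w
    show (v ≠ w ∧ _) ↔ _
    have h11 : (v.1 : R) * (w.1 : R) = 1 := by rw [hsub v.1, hsub w.1, mul_one]
    constructor
    · rintro ⟨hne, h | h⟩
      · rw [h11] at h; exact absurd h h1ne
      · have hmul : v.2 * w.2 = 1 := Units.ext (by simpa using h)
        have hw : w.2 = v.2⁻¹ := (inv_eq_iff_mul_eq_one.mpr hmul).symm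
        refine ⟨fun hq => hne ?_, hw⟩
        exact Prod.ext (hfst v.1 w.1) hq
    · rintro ⟨hne, hw⟩
      refine ⟨fun hq => hne (congrArg Prod.snd hq), Or.inr ?_⟩
      have : v.2 * w.2 = 1 := inv_eq_iff_mul_eq_one.mp hw.symm
      have := congrArg (Units.val) this
      simpa using this
  -- neighbor sets
  have hnbr : ∀ v : ({e : R // IsIdempotentElem e ∧ e ≠ 0} × Rˣ),
      (Cl2 R).neighborSet v = if v.2⁻¹ = v.2 then (∅ : Set _) else {(v.1, v.2⁻¹)} := by
    intro v
    ext w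
    rw [SimpleGraph.mem_neighborSet, hadj]
    by_cases hc : v.2⁻¹ = v.2
    · rw [if_pos hc]
      simp only [Set.mem_empty_iff_false, iff_false]
      rintro ⟨hne, hw⟩
      exact hne (by rw [hw, hc])
    · rw [if_neg hc]
      simp only [Set.mem_singleton_iff]
      constructor
      · rintro ⟨hne, hw⟩
        exact Prod.ext (hfst w.1 v.1) hw
      · rintro rfl
        exact ⟨fun hq => hc hq.symm, rfl⟩
  have hncard : ∀ v : ({e : R // IsIdempotentElem e ∧ e ≠ 0} × Rˣ),
      ((Cl2 R).neighborSet v).ncard = if v.2⁻¹ = v.2 then 0 else 1 := by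
    intro v
    rw [hnbr v]
    split_ifs <;> simp
  -- degrees
  have hdeg : ∀ v : ({e : R // IsIdempotentElem e ∧ e ≠ 0} × Rˣ),
      (Cl2 R).degree v = ((Cl2 R).neighborSet v).ncard := by
    intro v
    rw [SimpleGraph.degree, SimpleGraph.neighborFinset_def, Set.ncard_eq_toFinset_card']
  -- count the units with u⁻¹ = u
  have hfilter : (Finset.univ.filter (fun u : Rˣ => u⁻¹ = u)) = {1, -1} := by
    ext u
    simp [zmod_units_inv_eq_self_iff hp hodd hα u]
  have hfiltercard : (Finset.univ.filter (fun u : Rˣ => u⁻¹ = u)).card = 2 := by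
    rw [hfilter]
    rw [Finset.card_insert_of_notMem (by simpa using (hminus ·.symm)), Finset.card_singleton]
  have hcard2 : 2 ≤ Fintype.card Rˣ := by
    calc 2 = (Finset.univ.filter (fun u : Rˣ => u⁻¹ = u)).card := hfiltercard.symm
    _ ≤ Finset.univ.card := Finset.card_le_card (Finset.filter_subset _ _)
    _ = Fintype.card Rˣ := Finset.card_univ
  -- sum of degrees
  have hScard : Fintype.card {e : R // IsIdempotentElem e ∧ e ≠ 0} = 1 := by
    rw [Fintype.card_eq_one_iff]
    exact ⟨⟨1, IsIdempotentElem.one, h1ne⟩, fun y => hfst y _⟩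
  have hsumdeg : ∑ v, (Cl2 R).degree v = Fintype.card Rˣ - 2 := by
    calc ∑ v, (Cl2 R).degree v
        = ∑ v : ({e : R // IsIdempotentElem e ∧ e ≠ 0} × Rˣ),
            (if v.2⁻¹ = v.2 then 0 else 1) := by
          refine Finset.sum_congr rfl fun v _ => ?_
          rw [hdeg v, hncard v]
      _ = ∑ _x : {e : R // IsIdempotentElem e ∧ e ≠ 0},
            ∑ u : Rˣ, (if u⁻¹ = u then 0 else 1) := by rw [Fintype.sum_prod_type]
      _ = ∑ u : Rˣ, (if u⁻¹ = u then 0 else 1) := by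
          rw [Finset.sum_const, Finset.card_univ, hScard, one_smul]
      _ = (Finset.univ.filter (fun u : Rˣ => ¬ (u⁻¹ = u))).card := by
          rw [Finset.card_filter]
          refine Finset.sum_congr rfl fun u _ => ?_
          by_cases h : u⁻¹ = u <;> simp [h]
      _ = Fintype.card Rˣ - 2 := by
          rw [Finset.filter_not, Finset.card_sdiff_of_subset (Finset.filter_subset _ _),
            hfiltercard, Finset.card_univ]
  -- handshake
  have hhand : ∑ v, (Cl2 R).degree v = 2 * (Cl2 R).edgeFinset.card :=
    SimpleGraph.sum_degrees_eq_twice_card_edges _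
  have hE : 2 * (Cl2 R).edgeFinset.card = Fintype.card Rˣ - 2 := by
    rw [← hhand, hsumdeg]
  have hcardU : Fintype.card Rˣ = (p^α).totient := ZMod.card_units_eq_totient _
  -- compute the Sombor index
  have hsom : somborIndex (Cl2 R) = ((Cl2 R).edgeFinset.card : ℝ) * Real.sqrt 2 := by
    rw [somborIndex, ← SimpleGraph.coe_edgeFinset, finsum_mem_coe_finset]
    have hterm : ∀ e ∈ (Cl2 R).edgeFinset,
        (Sym2.lift
          ⟨fun u v => Real.sqrt ((((Cl2 R).neighborSet u).ncard : ℝ) ^ 2 +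
              (((Cl2 R).neighborSet v).ncard : ℝ) ^ 2),
            fun u v => by simp [add_comm]⟩) e = Real.sqrt 2 := by
      intro e he
      induction e with
      | _ v w =>
        rw [SimpleGraph.mem_edgeFinset, SimpleGraph.mem_edgeSet] at he
        obtain ⟨hne, hw⟩ := (hadj v w).mp he
        have hv1 : ¬ (v.2⁻¹ = v.2) := fun h => hne (by rw [hw, h])
        have hw1 : ¬ (w.2⁻¹ = w.2) := by
          rw [hw, inv_inv]
          exact fun h => hne (by rw [hw, ← h])
        rw [Sym2.lift_mk]
        show Real.sqrt ((((Cl2 R).neighborSet v).ncard : ℝ) ^ 2 +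
            (((Cl2 R).neighborSet w).ncard : ℝ) ^ 2) = Real.sqrt 2
        rw [hncard v, hncard w, if_neg hv1, if_neg hw1]
        norm_num
    rw [Finset.sum_congr rfl hterm, Finset.sum_const, nsmul_eq_mul]
  have h2t : 2 ≤ (p^α).totient := hcardU ▸ hcard2
  have hEr : ((Cl2 R).edgeFinset.card : ℝ) = (((p^α).totient : ℝ) - 2) / 2 := by
    have hc := congrArg (Nat.cast : ℕ → ℝ) hE
    rw [hcardU] at hc
    push_cast [Nat.cast_sub h2t] at hc
    linarith
  rw [hsom, hEr]
end

section
/- Let p be an odd prime and α a positive integer, and set n = p^α. Then every vertex of the graph Cl₂(ℤ_n) has degree at most 1, and the number of edges of Cl₂(ℤ_n) equals (φ(n) − 2)/2; moreover, exactly 2 vertices of Cl₂(ℤ_n) are isolated (have degree 0). -/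
instance {M : Type*} [Mul M] [DecidableEq M] : DecidablePred (IsIdempotentElem (M := M)) :=
  fun e => decidable_of_iff (e * e = e) Iff.rfl

private lemma prime_pow_int_dvd_mul {p α : ℕ} (hp : p.Prime) {a b : ℤ}
    (h : (p : ℤ) ^ α ∣ a * b) (hcop : IsCoprime a b) :
    (p : ℤ) ^ α ∣ a ∨ (p : ℤ) ^ α ∣ b := by
  have hpz : Prime (p : ℤ) := Nat.prime_iff_prime_int.mp hp
  by_cases hd : (p : ℤ) ∣ a
  · exact Or.inl (hpz.pow_dvd_of_dvd_mul_right α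
      (fun hb => hpz.not_unit (hcop.isUnit_of_dvd' hd hb)) h)
  · exact Or.inr (hpz.pow_dvd_of_dvd_mul_left α hd h)

private lemma zmod_idem_s4 {p α n : ℕ} (hp : p.Prime) (hn : n = p ^ α) [NeZero n]
    (e : ZMod n) (he : IsIdempotentElem e) : e = 0 ∨ e = 1 := by
  set a : ℤ := (e.val : ℤ) with ha_def
  have ha : ((a : ZMod n)) = e := by
    rw [ha_def, Int.cast_natCast]
    exact ZMod.natCast_rightInverse e
  have h0 : ((a * (a - 1) : ℤ) : ZMod n) = 0 := by
    push_cast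
    rw [ha, mul_sub, he.eq, mul_one, sub_self]
  have hdvd : (p : ℤ) ^ α ∣ a * (a - 1) := by
    have h1 := (ZMod.intCast_zmod_eq_zero_iff_dvd _ n).1 h0
    rwa [hn, Nat.cast_pow] at h1
  rcases prime_pow_int_dvd_mul hp hdvd ⟨1, -1, by ring⟩ with h | h
  · left
    rw [← ha, ZMod.intCast_zmod_eq_zero_iff_dvd, hn, Nat.cast_pow]
    exact h
  · right
    have h1 : ((a - 1 : ℤ) : ZMod n) = 0 := by
      rw [ZMod.intCast_zmod_eq_zero_iff_dvd, hn, Nat.cast_pow]; exact h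
    push_cast at h1
    rw [ha] at h1
    exact sub_eq_zero.1 h1

private lemma zmod_sq_one {p α n : ℕ} (hp : p.Prime) (hodd : p ≠ 2) (hn : n = p ^ α) [NeZero n]
    (u : ZMod n) (hu : u * u = 1) : u = 1 ∨ u = -1 := by
  set a : ℤ := (u.val : ℤ) with ha_def
  have ha : ((a : ZMod n)) = u := by
    rw [ha_def, Int.cast_natCast]
    exact ZMod.natCast_rightInverse u
  have hpz : Prime (p : ℤ) := Nat.prime_iff_prime_int.mp hp
  have h0 : (((a - 1) * (a + 1) : ℤ) : ZMod n) = 0 := by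
    push_cast
    rw [ha]
    linear_combination hu
  have hdvd : (p : ℤ) ^ α ∣ (a - 1) * (a + 1) := by
    have h1 := (ZMod.intCast_zmod_eq_zero_iff_dvd _ n).1 h0
    rwa [hn, Nat.cast_pow] at h1
  by_cases hd : (p : ℤ) ∣ (a - 1)
  · left
    have hnd : ¬ (p : ℤ) ∣ (a + 1) := by
      intro h2
      have h3 : (p : ℤ) ∣ 2 := by
        have := dvd_sub h2 hd
        simpa using this
      have h4 : p ∣ 2 := by exact_mod_cast h3
      have := (Nat.prime_dvd_prime_iff_eq hp Nat.prime_two).1 h4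
      exact hodd this
    have h5 := hpz.pow_dvd_of_dvd_mul_right α hnd hdvd
    have h1 : ((a - 1 : ℤ) : ZMod n) = 0 := by
      rw [ZMod.intCast_zmod_eq_zero_iff_dvd, hn, Nat.cast_pow]; exact h5
    push_cast at h1
    rw [ha] at h1
    exact sub_eq_zero.1 h1
  · right
    have h5 := hpz.pow_dvd_of_dvd_mul_left α hd hdvd
    have h1 : ((a + 1 : ℤ) : ZMod n) = 0 := by
      rw [ZMod.intCast_zmod_eq_zero_iff_dvd, hn, Nat.cast_pow]; exact h5
    push_cast at h1
    rw [ha] at h1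
    exact eq_neg_of_add_eq_zero_left h1

theorem cl2_prime_power_structure (p : ℕ) (hp : p.Prime) (hodd : p ≠ 2) (α : ℕ)
    (hα : 0 < α) (n : ℕ) (hn : n = p ^ α) :
    (∀ v, ((Cl2 (ZMod n)).neighborSet v).ncard ≤ 1) ∧
    (Cl2 (ZMod n)).edgeSet.ncard = (n.totient - 2) / 2 ∧
    {v | (Cl2 (ZMod n)).neighborSet v = ∅}.ncard = 2 := by
  haveI hnz : NeZero n := ⟨by rw [hn]; exact pow_ne_zero _ hp.ne_zero⟩
  have hp3 : 3 ≤ p := by have := hp.two_le; omega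
  have hn3 : 3 ≤ n := by
    rw [hn]
    calc 3 ≤ p := hp3
      _ = p ^ 1 := (pow_one p).symm
      _ ≤ p ^ α := Nat.pow_le_pow_right (by omega) hα
  haveI : Fact (1 < n) := ⟨by omega⟩
  have hone_ne : (1 : ZMod n) ≠ -1 := by
    intro h
    have h2 : ((2 : ℕ) : ZMod n) = 0 := by push_cast; linear_combination h
    have h3 := (ZMod.natCast_eq_zero_iff 2 n).1 h2
    have := Nat.le_of_dvd (by norm_num) h3
    omega
  -- the unique nonzero idempotent
  have hidem : ∀ x : {e : ZMod n // IsIdempotentElem e ∧ e ≠ 0}, (x : ZMod n) = 1 := by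
    intro x
    rcases zmod_idem_s4 hp hn x.1 x.2.1 with h | h
    · exact absurd h x.2.2
    · exact h
  set one1 : {e : ZMod n // IsIdempotentElem e ∧ e ≠ 0} :=
    ⟨1, IsIdempotentElem.one, one_ne_zero⟩ with hone1
  have hI : ∀ x, x = one1 := fun x => Subtype.ext (hidem x)
  -- units squaring to one
  have hUsq : ∀ u : (ZMod n)ˣ, u * u = 1 ↔ (u = 1 ∨ u = -1) := by
    intro u
    constructor
    · intro h
      have h2 : (u : ZMod n) * u = 1 := by rw [← Units.val_mul, h, Units.val_one]
      rcases zmod_sq_one hp hodd hn u h2 with h1 | h1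
      · left; ext; simpa using h1
      · right; ext; simpa using h1
    · rintro (rfl | rfl) <;> simp
  have hU1ne : (1 : (ZMod n)ˣ) ≠ -1 := by
    intro h
    apply hone_ne
    simpa using congrArg Units.val h
  -- adjacency characterization
  have hAdj : ∀ v w, (Cl2 (ZMod n)).Adj v w ↔ v ≠ w ∧ w.2 = v.2⁻¹ := by
    intro v w
    constructor
    · rintro ⟨hne, h | h⟩
      · rw [hidem v.1, hidem w.1, mul_one] at h
        exact absurd h one_ne_zero
      · refine ⟨hne, ?_⟩
        have h2 : v.2 * w.2 = 1 := Units.ext (by simpa using h)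
        exact eq_inv_of_mul_eq_one_left (by rw [mul_comm]; exact h2)
    · rintro ⟨hne, h⟩
      exact ⟨hne, Or.inr (by rw [h]; simp)⟩
  -- neighbor sets
  have hsub : ∀ v, (Cl2 (ZMod n)).neighborSet v ⊆ {(one1, v.2⁻¹)} := by
    intro v w hw
    have h := (hAdj v w).1 hw
    have hw1 : w.1 = one1 := hI w.1
    simp only [Set.mem_singleton_iff]
    exact Prod.ext_iff.2 ⟨hw1, h.2⟩
  have hempty : ∀ v, ((Cl2 (ZMod n)).neighborSet v = ∅ ↔ v.2 * v.2 = 1) := by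
    intro v
    constructor
    · intro h
      by_contra hne
      have hvne : v ≠ (one1, v.2⁻¹) := by
        intro he
        exact hne (mul_eq_one_iff_eq_inv.2 (congrArg Prod.snd he))
      have hmem : (one1, v.2⁻¹) ∈ (Cl2 (ZMod n)).neighborSet v := (hAdj _ _).2 ⟨hvne, rfl⟩
      rw [h] at hmem
      exact hmem
    · intro h
      rw [Set.eq_empty_iff_forall_notMem]
      intro w hw
      have h2 := (hAdj v w).1 hw
      apply h2.1
      refine (Prod.ext_iff.2 ⟨?_, ?_⟩).symm
      · rw [hI v.1, hI w.1]
      · rw [h2.2, ← mul_eq_one_iff_eq_inv.1 h]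
  refine ⟨?_, ?_, ?_⟩
  · -- degrees at most 1
    intro v
    calc ((Cl2 (ZMod n)).neighborSet v).ncard
        ≤ ({(one1, v.2⁻¹)} : Set _).ncard :=
          Set.ncard_le_ncard (hsub v) (Set.finite_singleton _)
      _ = 1 := Set.ncard_singleton _
  · -- edge count
    haveI : DecidableRel (Cl2 (ZMod n)).Adj := fun v w =>
      decidable_of_iff (v ≠ w ∧ (((v.1 : ZMod n) * (w.1 : ZMod n) = 0) ∨
        ((v.2 : ZMod n) * (w.2 : ZMod n) = 1))) Iff.rfl
    have hcardI : Fintype.card {e : ZMod n // IsIdempotentElem e ∧ e ≠ 0} = 1 :=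
      Fintype.card_eq_one_iff.2 ⟨one1, hI⟩
    have hcardV : Fintype.card ({e : ZMod n // IsIdempotentElem e ∧ e ≠ 0} × (ZMod n)ˣ)
        = n.totient := by
      rw [Fintype.card_prod, hcardI, one_mul, ZMod.card_units_eq_totient]
    have hdeg : ∀ v, (Cl2 (ZMod n)).degree v = if v.2 * v.2 = 1 then 0 else 1 := by
      intro v
      have h1 : (Cl2 (ZMod n)).degree v = ((Cl2 (ZMod n)).neighborSet v).ncard := by
        rw [← SimpleGraph.card_neighborSet_eq_degree, Set.ncard_eq_toFinset_card',
          Set.toFinset_card]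
      by_cases h : v.2 * v.2 = 1
      · rw [h1, (hempty v).2 h, if_pos h, Set.ncard_empty]
      · have hvne : v ≠ (one1, v.2⁻¹) := by
          intro he
          exact h (mul_eq_one_iff_eq_inv.2 (congrArg Prod.snd he))
        have hmem : (one1, v.2⁻¹) ∈ (Cl2 (ZMod n)).neighborSet v := (hAdj _ _).2 ⟨hvne, rfl⟩
        have heq : (Cl2 (ZMod n)).neighborSet v = {(one1, v.2⁻¹)} :=
          subset_antisymm (hsub v) (Set.singleton_subset_iff.2 hmem)
        rw [h1, heq, Set.ncard_singleton, if_neg h]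
    have hfix : (Finset.univ.filter
        (fun v : {e : ZMod n // IsIdempotentElem e ∧ e ≠ 0} × (ZMod n)ˣ =>
          v.2 * v.2 = 1)).card = 2 := by
      have heq : Finset.univ.filter
          (fun v : {e : ZMod n // IsIdempotentElem e ∧ e ≠ 0} × (ZMod n)ˣ =>
            v.2 * v.2 = 1) = {(one1, 1), (one1, -1)} := by
        ext v
        simp only [Finset.mem_filter, Finset.mem_univ, true_and, Finset.mem_insert,
          Finset.mem_singleton]
        rw [hUsq]
        constructor
        · rintro (h | h)
          · left; exact Prod.ext_iff.2 ⟨hI v.1, h⟩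
          · right; exact Prod.ext_iff.2 ⟨hI v.1, h⟩
        · rintro (rfl | rfl) <;> simp
      rw [heq, Finset.card_pair (by simp [hU1ne])]
    have hsum : ∑ v, (Cl2 (ZMod n)).degree v = n.totient - 2 := by
      have hc := Finset.card_filter_add_card_filter_not (s := Finset.univ)
        (p := fun v : {e : ZMod n // IsIdempotentElem e ∧ e ≠ 0} × (ZMod n)ˣ =>
          v.2 * v.2 = 1)
      rw [Finset.card_univ, hcardV, hfix] at hc
      calc ∑ v, (Cl2 (ZMod n)).degree v
          = ∑ v, (if v.2 * v.2 = 1 then 0 else 1) := Finset.sum_congr rfl fun v _ => hdeg v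
        _ = (Finset.univ.filter
            (fun v : {e : ZMod n // IsIdempotentElem e ∧ e ≠ 0} × (ZMod n)ˣ =>
              ¬ (v.2 * v.2 = 1))).card := by
            rw [Finset.card_filter]
            exact Finset.sum_congr rfl fun v _ => by by_cases h : v.2 * v.2 = 1 <;> simp [h]
        _ = n.totient - 2 := by omega
    have h2e : 2 * (Cl2 (ZMod n)).edgeFinset.card = n.totient - 2 := by
      rw [← SimpleGraph.sum_degrees_eq_twice_card_edges, hsum]
    have hedge : (Cl2 (ZMod n)).edgeSet.ncard = (Cl2 (ZMod n)).edgeFinset.card := by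
      rw [← SimpleGraph.coe_edgeFinset, Set.ncard_coe_finset]
    omega
  · -- isolated vertices
    have hset : {v | (Cl2 (ZMod n)).neighborSet v = ∅}
        = {(one1, (1 : (ZMod n)ˣ)), (one1, -1)} := by
      ext v
      simp only [Set.mem_setOf_eq, Set.mem_insert_iff, Set.mem_singleton_iff]
      rw [hempty v, hUsq]
      constructor
      · rintro (h | h)
        · left; exact Prod.ext_iff.2 ⟨hI v.1, h⟩
        · right; exact Prod.ext_iff.2 ⟨hI v.1, h⟩
      · rintro (rfl | rfl) <;> simp
    rw [hset]
    exact Set.ncard_pair (by simp [hU1ne])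
end

section
/- Let α ≥ 3 be an integer and n = 2^α. Then the Sombor index of Cl₂(ℤ_n) equals ((φ(n) − 4)/2) · √2, where φ is Euler's totient function. -/
-- idempotents of ZMod 2^α
lemma zmod_idem_s5 (α : ℕ) (hα : 1 ≤ α) (e : ZMod (2 ^ α)) (he : IsIdempotentElem e)
    (he0 : e ≠ 0) : e = 1 := by
  haveI : NeZero (2 ^ α) := ⟨pow_ne_zero _ two_ne_zero⟩
  -- one of e, 1 - e is a unit
  have hcast : ∀ x : ZMod (2 ^ α), ((x.val : ℕ) : ZMod (2 ^ α)) = x := by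
    intro x; rw [ZMod.natCast_val, ZMod.cast_id]
  have hsum : (e.val + (1 - e).val) % 2 ^ α = 1 % 2 ^ α := by
    have : ((e.val + (1 - e).val : ℕ) : ZMod (2 ^ α)) = ((1 : ℕ) : ZMod (2 ^ α)) := by
      push_cast
      rw [hcast, hcast]; ring
    rwa [ZMod.natCast_eq_natCast_iff] at this
  have hone : 1 % 2 ^ α = 1 := Nat.one_mod_eq_one.mpr (by
    have : (2:ℕ)^1 ≤ 2 ^ α := Nat.pow_le_pow_right (by norm_num) hα
    omega)
  -- parity: e.val + (1-e).val is odd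
  have hpar : ¬ (2 ∣ e.val ∧ 2 ∣ (1 - e).val) := by
    rintro ⟨h1, h2⟩
    have h2d : (2:ℕ) ∣ 2 ^ α := dvd_pow_self 2 (by omega)
    have := Nat.mod_mod_of_dvd (e.val + (1 - e).val) h2d
    rw [hsum, hone] at this
    omega
  have hunit : IsUnit e ∨ IsUnit (1 - e) := by
    rcases Nat.even_or_odd e.val with h | h
    · right
      rw [← hcast (1 - e)]
      rw [ZMod.isUnit_iff_coprime]
      have hodd : ¬ 2 ∣ (1 - e).val := fun hd => hpar ⟨h.two_dvd, hd⟩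
      apply Nat.Coprime.pow_right
      exact Nat.coprime_comm.mp ((Nat.Prime.coprime_iff_not_dvd Nat.prime_two).mpr hodd)
    · left
      rw [← hcast e, ZMod.isUnit_iff_coprime]
      apply Nat.Coprime.pow_right
      have hodd : ¬ 2 ∣ e.val := fun hd => by
        rcases Nat.even_or_odd (1 - e).val with h2 | h2
        · exact hpar ⟨hd, h2.two_dvd⟩
        · exact (Nat.not_even_iff_odd.mpr h) (even_iff_two_dvd.mpr hd)
      exact Nat.coprime_comm.mp ((Nat.Prime.coprime_iff_not_dvd Nat.prime_two).mpr hodd)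
  have hmul : e * (1 - e) = 0 := by
    have h' : e * e = e := he
    linear_combination -h'
  rcases hunit with h | h
  · rcases h with ⟨u, rfl⟩
    have : (1 : ZMod (2^α)) - u = 0 := by
      have := congrArg (fun y => (↑u⁻¹ : ZMod (2^α)) * y) hmul
      simpa [← mul_assoc] using this
    linear_combination -this
  · rcases h with ⟨u, hu⟩
    exfalso; apply he0
    have : e * (1 - e) = 0 := hmul
    rw [← hu] at this
    have := congrArg (fun y => y * (↑u⁻¹ : ZMod (2^α))) this
    simpa [mul_assoc] using this

lemma zmod_cm (α : ℕ) (hα : 1 ≤ α) (m : ℤ) :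
    (((2 ^ (α - 1) : ℕ) : ZMod (2 ^ α)) : ZMod (2 ^ α)) * (m : ZMod (2 ^ α)) = 0 ∨
    (((2 ^ (α - 1) : ℕ) : ZMod (2 ^ α))) * (m : ZMod (2 ^ α)) = ((2 ^ (α - 1) : ℕ) : ZMod (2 ^ α)) := by
  set c : ZMod (2 ^ α) := ((2 ^ (α - 1) : ℕ) : ZMod (2 ^ α)) with hc
  have hc2 : c + c = 0 := by
    rw [hc, ← Nat.cast_add]
    have : 2 ^ (α - 1) + 2 ^ (α - 1) = 2 ^ α := by
      rw [← two_mul, ← pow_succ']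
      congr 1; omega
    rw [this, ZMod.natCast_self]
  rcases Int.even_or_odd m with ⟨t, ht⟩ | ⟨t, ht⟩
  · left; subst ht; push_cast; ring_nf
    linear_combination (t : ZMod (2^α)) * hc2
  · right; subst ht; push_cast; ring_nf
    linear_combination (t : ZMod (2^α)) * hc2

lemma zmod_sq_one_s5 (α : ℕ) (hα : 3 ≤ α) (x : ZMod (2 ^ α)) :
    x * x = 1 ↔ x = 1 ∨ x = -1 ∨
      x = ((2 ^ (α - 1) : ℕ) : ZMod (2 ^ α)) + 1 ∨ x = ((2 ^ (α - 1) : ℕ) : ZMod (2 ^ α)) - 1 := by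
  haveI : NeZero (2 ^ α) := ⟨pow_ne_zero _ two_ne_zero⟩
  set c : ZMod (2 ^ α) := ((2 ^ (α - 1) : ℕ) : ZMod (2 ^ α)) with hc
  have hc2 : c + c = 0 := by
    rw [hc, ← Nat.cast_add]
    have : 2 ^ (α - 1) + 2 ^ (α - 1) = 2 ^ α := by
      rw [← two_mul, ← pow_succ']; congr 1; omega
    rw [this, ZMod.natCast_self]
  have hcc : c * c = 0 := by
    rw [hc, ← Nat.cast_mul, ← pow_add]
    have : (2:ℕ) ^ α ∣ 2 ^ (α - 1 + (α - 1)) := pow_dvd_pow 2 (by omega)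
    exact (ZMod.natCast_eq_zero_iff _ _).mpr this
  constructor
  · intro hx
    -- x is a unit, so x.val is odd
    have hu : IsUnit x := IsUnit.of_mul_eq_one x hx
    have hvx : ((x.val : ℕ) : ZMod (2 ^ α)) = x := by rw [ZMod.natCast_val, ZMod.cast_id]
    have hco : (x.val).Coprime (2 ^ α) := by
      rw [← ZMod.isUnit_iff_coprime, hvx]; exact hu
    have hodd : ¬ (2:ℕ) ∣ x.val := by
      intro hd
      have h2d : (2:ℕ) ∣ Nat.gcd x.val (2 ^ α) := Nat.dvd_gcd hd (dvd_pow_self 2 (by omega))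
      rw [hco] at h2d; omega
    -- lift to ℤ
    set b : ℤ := (x.val : ℤ) with hb
    have hxb : ((b : ℤ) : ZMod (2 ^ α)) = x := by rw [hb]; push_cast; exact hvx
    have hdvd : ((2 ^ α : ℕ) : ℤ) ∣ (b - 1) * (b + 1) := by
      rw [← ZMod.intCast_zmod_eq_zero_iff_dvd]
      push_cast
      rw [hxb]; linear_combination hx
    have hbodd : Odd b := by
      rw [Int.odd_iff]
      rcases Nat.odd_iff.mp (Nat.odd_iff.mpr (by omega : x.val % 2 = 1)) with _
      omega
    obtain ⟨k, hk⟩ := hbodd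
    have h4 : ((2:ℤ) ^ α) = 4 * 2 ^ (α - 2) := by
      rw [show (4:ℤ) = 2 ^ 2 by norm_num, ← pow_add]; congr 1; omega
    have hdvd2 : (2:ℤ) ^ (α - 2) ∣ k * (k + 1) := by
      have : (4:ℤ) * 2 ^ (α - 2) ∣ 4 * (k * (k + 1)) := by
        rw [← h4]
        convert hdvd using 1
        · push_cast; ring_nf
        · rw [hk]; ring
      exact (mul_dvd_mul_iff_left (by norm_num : (4:ℤ) ≠ 0)).mp this
    have key : ∀ t : ℤ, Odd t → IsCoprime ((2:ℤ) ^ (α - 2)) t := by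
      intro t ht
      apply IsCoprime.pow_left
      rw [Int.prime_two.coprime_iff_not_dvd]
      intro hd; rw [Int.odd_iff] at ht; omega
    rcases Int.even_or_odd k with hke | hko
    · -- k even, k+1 odd, so 2^(α-2) ∣ k
      have hdk : (2:ℤ) ^ (α - 2) ∣ k :=
        (key (k+1) (by rcases hke with ⟨t, ht⟩; exact ⟨t, by omega⟩)).dvd_of_dvd_mul_right hdvd2
      obtain ⟨m, hm⟩ := hdk
      -- b = 2^(α-1) * m + 1
      have hbm : b = 2 ^ (α - 1) * m + 1 := by
        rw [hk, hm, show (2:ℤ) ^ (α-1) = 2 * 2 ^ (α-2) by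
          rw [← pow_succ']; congr 1; omega]
        ring
      have hxcm : x = c * (m : ZMod (2 ^ α)) + 1 := by
        rw [← hxb, hbm]
        push_cast
        rw [hc]; push_cast; ring
      rcases zmod_cm α (by omega) m with h | h
      · left; rw [hxcm, ← hc] at *; rw [h]; ring
      · right; right; left; rw [hxcm, ← hc] at *; rw [h]
    · -- k odd, so 2^(α-2) ∣ k+1
      have hdk : (2:ℤ) ^ (α - 2) ∣ (k + 1) :=
        (key k hko).dvd_of_dvd_mul_left hdvd2
      obtain ⟨m, hm⟩ := hdk
      have hbm : b = 2 ^ (α - 1) * m - 1 := by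
        have : k = 2 ^ (α - 2) * m - 1 := by omega
        rw [hk, this, show (2:ℤ) ^ (α-1) = 2 * 2 ^ (α-2) by
          rw [← pow_succ']; congr 1; omega]
        ring
      have hxcm : x = c * (m : ZMod (2 ^ α)) - 1 := by
        rw [← hxb, hbm]
        push_cast
        rw [hc]; push_cast; ring
      rcases zmod_cm α (by omega) m with h | h
      · right; left; rw [hxcm, ← hc] at *; rw [h]; ring
      · right; right; right; rw [hxcm, ← hc] at *; rw [h]
  · rintro (rfl | rfl | rfl | rfl)
    · ring
    · ring
    · linear_combination hcc + hc2
    · linear_combination hcc - hc2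

lemma zmod_card_sq_one (α : ℕ) (hα : 3 ≤ α) [NeZero (2 ^ α)] :
    (Finset.univ.filter (fun u : (ZMod (2 ^ α))ˣ => u * u = 1)).card = 4 := by
  classical
  set c : ZMod (2 ^ α) := ((2 ^ (α - 1) : ℕ) : ZMod (2 ^ α)) with hc
  -- distinctness facts
  have hpow : ∀ m : ℕ, 0 < m → m < 2 ^ α → ((m : ℕ) : ZMod (2 ^ α)) ≠ 0 := by
    intro m hm1 hm2 h
    rw [ZMod.natCast_eq_zero_iff] at h
    exact absurd (Nat.le_of_dvd hm1 h) (by omega)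
  have hα4 : (4:ℕ) ≤ 2 ^ (α - 1) := by
    calc (4:ℕ) = 2 ^ 2 := by norm_num
    _ ≤ 2 ^ (α - 1) := Nat.pow_le_pow_right (by norm_num) (by omega)
  have hlt : 2 ^ (α - 1) < 2 ^ α := Nat.pow_lt_pow_right (by norm_num) (by omega)
  have hdouble : 2 ^ α = 2 * 2 ^ (α - 1) := by rw [← pow_succ']; congr 1; omega
  have h20 : (2 : ZMod (2 ^ α)) ≠ 0 := by
    have := hpow 2 (by norm_num) (by omega)
    simpa using this
  have hc0 : c ≠ 0 := hpow _ (by omega) hlt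
  have hc2 : c ≠ 2 := by
    intro h
    rw [hc, show ((2 : ZMod (2^α))) = ((2:ℕ) : ZMod (2^α)) by push_cast; ring,
      ZMod.natCast_eq_natCast_iff] at h
    have := Nat.ModEq.eq_of_lt_of_lt h hlt (by omega)
    omega
  have hcm2 : c + 2 ≠ 0 := by
    intro h
    rw [hc, show ((2 : ZMod (2^α))) = ((2:ℕ) : ZMod (2^α)) by push_cast; ring,
      ← Nat.cast_add] at h
    exact hpow _ (by omega) (by omega) h
  -- the target finset
  set T : Finset (ZMod (2 ^ α)) := {1, -1, c + 1, c - 1} with hT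
  have hTcard : T.card = 4 := by
    rw [hT]
    rw [Finset.card_insert_of_notMem, Finset.card_insert_of_notMem,
      Finset.card_insert_of_notMem, Finset.card_singleton]
    · simp only [Finset.mem_singleton]
      exact fun h => h20 (by linear_combination h)
    · simp only [Finset.mem_insert, Finset.mem_singleton]
      push_neg
      exact ⟨fun h => hcm2 (by linear_combination -h), fun h => hc0 (by linear_combination -h)⟩
    · simp only [Finset.mem_insert, Finset.mem_singleton]
      push_neg
      refine ⟨fun h => h20 (by linear_combination h), fun h => hc0 (by linear_combination -h),
        fun h => hc2 (by linear_combination -h)⟩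
  rw [← hTcard]
  apply Finset.card_bij (fun (u : (ZMod (2 ^ α))ˣ) _ => (u : ZMod (2 ^ α)))
  · intro u hu
    simp only [Finset.mem_filter, Finset.mem_univ, true_and] at hu
    have : (u : ZMod (2^α)) * (u : ZMod (2^α)) = 1 := by
      rw [← Units.val_mul, hu, Units.val_one]
    have := (zmod_sq_one_s5 α hα _).mp this
    rw [hT]
    simp only [Finset.mem_insert, Finset.mem_singleton]
    tauto
  · intro u hu v hv h
    exact Units.ext h
  · intro x hx
    have hsq : x * x = 1 := by
      apply (zmod_sq_one_s5 α hα x).mpr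
      rw [hT] at hx
      simp only [Finset.mem_insert, Finset.mem_singleton] at hx
      tauto
    refine ⟨⟨x, x, hsq, hsq⟩, ?_, rfl⟩
    simp only [Finset.mem_filter, Finset.mem_univ, true_and]
    exact Units.ext hsq

section Graph

variable {α : ℕ}

lemma cl2_fst (hα : 3 ≤ α) (v w : {e : ZMod (2^α) // IsIdempotentElem e ∧ e ≠ 0} × (ZMod (2^α))ˣ) :
    v.1 = w.1 :=
  Subtype.ext (by
    rw [zmod_idem_s5 α (by omega) v.1.1 v.1.2.1 v.1.2.2,
        zmod_idem_s5 α (by omega) w.1.1 w.1.2.1 w.1.2.2])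

lemma cl2_adj (hα : 3 ≤ α)
    (v w : {e : ZMod (2^α) // IsIdempotentElem e ∧ e ≠ 0} × (ZMod (2^α))ˣ) :
    (Cl2 (ZMod (2^α))).Adj v w ↔ v ≠ w ∧ v.2 * w.2 = 1 := by
  haveI : NeZero (2 ^ α) := ⟨pow_ne_zero _ two_ne_zero⟩
  haveI : Fact (1 < 2 ^ α) :=
    ⟨lt_of_lt_of_le (by norm_num : (1:ℕ) < 2 ^ 1) (Nat.pow_le_pow_right (by norm_num) (by omega))⟩
  constructor
  · rintro ⟨hne, h | h⟩
    · exfalso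
      rw [zmod_idem_s5 α (by omega) v.1.1 v.1.2.1 v.1.2.2,
        zmod_idem_s5 α (by omega) w.1.1 w.1.2.1 w.1.2.2, mul_one] at h
      exact one_ne_zero h
    · exact ⟨hne, Units.ext (by rw [Units.val_mul]; exact h)⟩
  · rintro ⟨hne, h⟩
    exact ⟨hne, Or.inr (by rw [← Units.val_mul, h, Units.val_one])⟩

lemma cl2_nbr (hα : 3 ≤ α)
    (v : {e : ZMod (2^α) // IsIdempotentElem e ∧ e ≠ 0} × (ZMod (2^α))ˣ) :
    (Cl2 (ZMod (2^α))).neighborSet v =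
      if v.2 * v.2 = 1 then ∅ else {(v.1, v.2⁻¹)} := by
  ext w
  rw [SimpleGraph.mem_neighborSet, cl2_adj hα]
  split_ifs with h
  · simp only [Set.mem_empty_iff_false, iff_false]
    rintro ⟨hne, hm⟩
    apply hne
    have h2 : w.2 = v.2 := by
      have : w.2 = v.2⁻¹ := eq_inv_of_mul_eq_one_right hm
      rw [this, inv_eq_of_mul_eq_one_right h]
    exact Prod.ext_iff.mpr ⟨cl2_fst hα v w, h2.symm⟩
  · simp only [Set.mem_singleton_iff]
    constructor
    · rintro ⟨hne, hm⟩
      exact Prod.ext_iff.mpr ⟨(cl2_fst hα v w).symm, eq_inv_of_mul_eq_one_right hm⟩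
    · rintro rfl
      refine ⟨fun he => h ?_, mul_inv_cancel v.2⟩
      have h2 : v.2 = v.2⁻¹ := congrArg Prod.snd he
      exact (congrArg (fun t => v.2 * t) h2).trans (mul_inv_cancel v.2)

lemma cl2_nbr_card (hα : 3 ≤ α)
    (v : {e : ZMod (2^α) // IsIdempotentElem e ∧ e ≠ 0} × (ZMod (2^α))ˣ) :
    ((Cl2 (ZMod (2^α))).neighborSet v).ncard = if v.2 * v.2 = 1 then 0 else 1 := by
  rw [cl2_nbr hα]
  split_ifs
  · simp
  · simp

end Graph

theorem sombor_two_power (α : ℕ) (hα : 3 ≤ α) (n : ℕ) (hn : n = 2 ^ α) :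
    somborIndex (Cl2 (ZMod n)) = ((n.totient : ℝ) - 4) / 2 * Real.sqrt 2 := by
  classical
  subst hn
  haveI : NeZero (2 ^ α) := ⟨pow_ne_zero _ two_ne_zero⟩
  haveI : Fact (1 < 2 ^ α) :=
    ⟨lt_of_lt_of_le (by norm_num : (1:ℕ) < 2 ^ 1) (Nat.pow_le_pow_right (by norm_num) (by omega))⟩
  set G := Cl2 (ZMod (2 ^ α)) with hG
  haveI : DecidableRel G.Adj := Classical.decRel _
  -- totient facts
  have hφ : (2 ^ α).totient = 2 ^ (α - 1) := by
    rw [Nat.totient_prime_pow Nat.prime_two (by omega)]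
    norm_num
  have hφ4 : 4 ≤ (2 ^ α).totient := by
    rw [hφ]
    calc (4:ℕ) = 2 ^ 2 := by norm_num
    _ ≤ 2 ^ (α - 1) := Nat.pow_le_pow_right (by norm_num) (by omega)
  -- degree = ncard neighborSet
  have hdeg : ∀ v : {e : ZMod (2^α) // IsIdempotentElem e ∧ e ≠ 0} × (ZMod (2^α))ˣ,
      G.degree v = (G.neighborSet v).ncard := by
    intro v
    rw [Set.ncard_eq_toFinset_card']
    rfl
  -- sum of degrees
  have hsum : ∑ v : {e : ZMod (2^α) // IsIdempotentElem e ∧ e ≠ 0} × (ZMod (2^α))ˣ,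
      G.degree v = (2 ^ α).totient - 4 := by
    have h1 : ∀ v : {e : ZMod (2^α) // IsIdempotentElem e ∧ e ≠ 0} × (ZMod (2^α))ˣ,
        G.degree v = if v.2 * v.2 = 1 then 0 else 1 := by
      intro v; rw [hdeg v, hG, cl2_nbr_card hα]
    have hA : ∑ v : {e : ZMod (2^α) // IsIdempotentElem e ∧ e ≠ 0} × (ZMod (2^α))ˣ, G.degree v
        = ∑ v : {e : ZMod (2^α) // IsIdempotentElem e ∧ e ≠ 0} × (ZMod (2^α))ˣ,
            (if v.2 * v.2 = 1 then 0 else 1) := Finset.sum_congr rfl (fun v _ => h1 v)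
    have hB : (∑ v : {e : ZMod (2^α) // IsIdempotentElem e ∧ e ≠ 0} × (ZMod (2^α))ˣ,
            (if v.2 * v.2 = 1 then 0 else 1))
        = ∑ e : {e : ZMod (2^α) // IsIdempotentElem e ∧ e ≠ 0}, ∑ u : (ZMod (2^α))ˣ,
            (if u * u = 1 then 0 else 1) := by
      exact Fintype.sum_prod_type
        (f := fun v : {e : ZMod (2^α) // IsIdempotentElem e ∧ e ≠ 0} × (ZMod (2^α))ˣ =>
          if v.2 * v.2 = 1 then 0 else 1)
    have hC : (∑ e : {e : ZMod (2^α) // IsIdempotentElem e ∧ e ≠ 0}, ∑ u : (ZMod (2^α))ˣ,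
            (if u * u = 1 then 0 else 1)) = (2 ^ α).totient - 4 := by
      have hcard1 : Fintype.card {e : ZMod (2^α) // IsIdempotentElem e ∧ e ≠ 0} = 1 := by
        rw [Fintype.card_eq_one_iff]
        refine ⟨⟨1, ⟨by simp [IsIdempotentElem], one_ne_zero⟩⟩, fun y => ?_⟩
        exact Subtype.ext (zmod_idem_s5 α (by omega) y.1 y.2.1 y.2.2)
      rw [Finset.sum_const, Finset.card_univ, hcard1, one_smul]
      have hsplit := Finset.card_filter_add_card_filter_not
        (s := (Finset.univ : Finset (ZMod (2^α))ˣ)) (p := fun u => u * u = 1)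
      rw [zmod_card_sq_one α hα, Finset.card_univ, ZMod.card_units_eq_totient] at hsplit
      have h2 : ∑ u : (ZMod (2^α))ˣ, (if u * u = 1 then 0 else 1)
          = (Finset.univ.filter (fun u : (ZMod (2^α))ˣ => ¬ u * u = 1)).card := by
        rw [Finset.card_filter]
        apply Finset.sum_congr rfl
        intro u _
        split_ifs with h
        · simp [h]
        · simp [h]
      rw [h2]
      omega
    exact hA.trans (hB.trans hC)
  -- edge count
  have hedge : 2 * G.edgeFinset.card = (2 ^ α).totient - 4 := by
    rw [← SimpleGraph.sum_degrees_eq_twice_card_edges, hsum]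
  -- Sombor
  rw [somborIndex, ← SimpleGraph.coe_edgeFinset, finsum_mem_coe_finset]
  have hterm : ∀ e ∈ G.edgeFinset,
      Sym2.lift
        ⟨fun u v =>
          Real.sqrt (((G.neighborSet u).ncard : ℝ) ^ 2 + ((G.neighborSet v).ncard : ℝ) ^ 2),
          fun u v => by simp [add_comm]⟩ e = Real.sqrt 2 := by
    intro e he
    rw [SimpleGraph.mem_edgeFinset] at he
    induction e with
    | _ v w =>
      rw [SimpleGraph.mem_edgeSet] at he
      rw [hG, cl2_adj hα] at he
      obtain ⟨hne, hm⟩ := he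
      have hv : ¬ v.2 * v.2 = 1 := by
        intro h
        apply hne
        have h2 : w.2 = v.2 := by
          have : w.2 = v.2⁻¹ := eq_inv_of_mul_eq_one_right hm
          rw [this, inv_eq_of_mul_eq_one_right h]
        exact Prod.ext_iff.mpr ⟨cl2_fst hα v w, h2.symm⟩
      have hw : ¬ w.2 * w.2 = 1 := by
        intro h
        apply hne
        have h2 : w.2 = v.2 := by
          have hv2 : v.2 = w.2⁻¹ := eq_inv_of_mul_eq_one_left hm
          rw [hv2, inv_eq_of_mul_eq_one_right h]
        exact Prod.ext_iff.mpr ⟨cl2_fst hα v w, h2.symm⟩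
      have h1 : (G.neighborSet v).ncard = 1 := by rw [hG, cl2_nbr_card hα, if_neg hv]
      have h2 : (G.neighborSet w).ncard = 1 := by rw [hG, cl2_nbr_card hα, if_neg hw]
      rw [Sym2.lift_mk]
      simp only [h1, h2]
      norm_num
  rw [Finset.sum_congr rfl hterm, Finset.sum_const, nsmul_eq_mul]
  have hc : (G.edgeFinset.card : ℝ) = (((2 ^ α).totient : ℝ) - 4) / 2 := by
    have hcast : ((2 * G.edgeFinset.card : ℕ) : ℝ) = (((2 ^ α).totient - 4 : ℕ) : ℝ) := by
      rw [hedge]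
    rw [Nat.cast_mul, Nat.cast_sub hφ4] at hcast
    push_cast at hcast
    linarith
  rw [hc]
end

section
/- Let α ≥ 3 be an integer and n = 2^α. Then every vertex of the graph Cl₂(ℤ_n) has degree at most 1, and the number of edges of Cl₂(ℤ_n) equals (φ(n) − 4)/2; moreover, exactly 4 vertices of Cl₂(ℤ_n) are isolated (have degree 0). -/
lemma idem_aux {β : ℕ} (e : ZMod (2^(β+3))) (he : IsIdempotentElem e) :
    e = 0 ∨ e = 1 := by
  haveI : NeZero (2^(β+3)) := ⟨by positivity⟩
  have key : ∀ f : ZMod (2^(β+3)), IsIdempotentElem f → 2 ∣ f.val → f = 0 := by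
    intro f hf ⟨m, hm⟩
    have h1 : f = ((f.val : ℕ) : ZMod (2^(β+3))) := (ZMod.natCast_zmod_val f).symm
    have h2 : f = ((2*m : ℕ) : ZMod (2^(β+3))) := by rw [h1, hm]
    have h3 : f = f ^ (β+3) := (hf.pow_succ_eq (β+2)).symm
    rw [h3, h2]
    push_cast
    have h4 : (2:ZMod (2^(β+3)))^(β+3) = 0 := by
      have h5 := ZMod.natCast_self (2^(β+3)); push_cast at h5; exact h5
    rw [mul_pow, h4, zero_mul]
  have h2 : ∀ x : ZMod 2, x = 0 ∨ x = 1 := by decide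
  have hdvd : (2:ℕ) ∣ 2^(β+3) := dvd_pow_self 2 (by omega)
  set φ := ZMod.castHom hdvd (ZMod 2) with hφ
  have keyφ : ∀ f : ZMod (2^(β+3)), IsIdempotentElem f → φ f = 0 → f = 0 := by
    intro f hf h0
    apply key f hf
    have h1 : φ f = ((f.val : ℕ) : ZMod 2) := by
      conv_lhs => rw [← ZMod.natCast_zmod_val f]
      rw [map_natCast]
    rw [h1] at h0
    exact (ZMod.natCast_eq_zero_iff _ _).mp h0
  rcases h2 (φ e) with h | h
  · exact Or.inl (keyφ e he h)
  · right
    have : (1 : ZMod (2^(β+3))) - e = 0 := by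
      apply keyφ _ he.one_sub
      rw [map_sub, map_one, h, sub_self]
    linear_combination -this

lemma classify_aux {β : ℕ} (x : ZMod (2^(β+3))) (hx : x * x = 1) :
    x = ((1:ℕ) : ZMod (2^(β+3))) ∨ x = ((2^(β+3)-1 : ℕ) : ZMod (2^(β+3))) ∨
    x = ((2^(β+2)+1 : ℕ) : ZMod (2^(β+3))) ∨ x = ((2^(β+2)-1 : ℕ) : ZMod (2^(β+3))) := by
  haveI : NeZero (2^(β+3)) := ⟨by positivity⟩
  haveI : Fact (1 < 2^(β+3)) := ⟨by
    have h := Nat.one_le_two_pow (n := β)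
    have h2 : (2:ℕ)^(β+3) = 8 * 2^β := by ring
    omega⟩
  have hppos : 0 < 2^(β+2) := by positivity
  set v := x.val with hvdef
  have hxv : ((v:ℕ) : ZMod (2^(β+3))) = x := ZMod.natCast_zmod_val x
  have hvlt : v < 2^(β+3) := ZMod.val_lt x
  have hv1 : 1 ≤ v := by
    rcases Nat.eq_zero_or_pos v with h | h
    · exfalso
      have hx0 : x = 0 := by rw [← hxv, h, Nat.cast_zero]
      rw [hx0, mul_zero] at hx
      exact one_ne_zero hx.symm
    · exact h
  have hv2 : 1 ≤ v * v := Nat.one_le_iff_ne_zero.mpr (by positivity)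
  have hdvd : 2^(β+3) ∣ v * v - 1 := by
    rw [← ZMod.natCast_eq_zero_iff]
    rw [Nat.cast_sub hv2, Nat.cast_mul, hxv, hx, Nat.cast_one, sub_self]
  obtain ⟨m, hm⟩ : Odd v := by
    rcases Nat.even_or_odd v with ⟨m, hm⟩ | h
    · exfalso
      have h2a : 2 ∣ v * v := ⟨m * (m + m), by rw [hm]; ring⟩
      have h2b : (2:ℕ) ∣ v * v - 1 := dvd_trans (dvd_pow_self 2 (by omega)) hdvd
      have h2c := Nat.dvd_sub h2a h2b
      rw [Nat.sub_sub_self hv2] at h2c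
      exact absurd h2c (by norm_num)
    · exact h
  have h7 : (2*m+1)*(2*m+1) = 4*(m*(m+1))+1 := by ring
  have hfac : v * v - 1 = 4*(m*(m+1)) := by rw [hm, h7, Nat.add_sub_cancel]
  rw [hfac] at hdvd
  have hdvd2 : 2^(β+1) ∣ m*(m+1) := by
    have h8 : (2:ℕ)^(β+3) = 4 * 2^(β+1) := by ring
    rw [h8] at hdvd
    exact (Nat.mul_dvd_mul_iff_left (by norm_num : 0 < (4:ℕ))).mp hdvd
  have hcase : 2^(β+2) ∣ v - 1 ∨ 2^(β+2) ∣ v + 1 := by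
    rcases Nat.even_or_odd m with ⟨t, ht⟩ | ⟨t, ht⟩
    · left
      have cop : Nat.Coprime (2^(β+1)) (m+1) :=
        Nat.Coprime.pow_left _ ((Nat.prime_two.coprime_iff_not_dvd).mpr (by rintro ⟨u, hu⟩; omega))
      have hk : 2^(β+1) ∣ m := cop.dvd_of_dvd_mul_right hdvd2
      have : v - 1 = 2 * m := by omega
      rw [this]
      have h9 : (2:ℕ)^(β+2) = 2 * 2^(β+1) := by ring
      rw [h9]
      exact mul_dvd_mul_left 2 hk
    · right
      have cop : Nat.Coprime (2^(β+1)) m :=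
        Nat.Coprime.pow_left _ ((Nat.prime_two.coprime_iff_not_dvd).mpr (by rintro ⟨u, hu⟩; omega))
      have hk : 2^(β+1) ∣ m + 1 := cop.dvd_of_dvd_mul_left hdvd2
      have : v + 1 = 2 * (m + 1) := by omega
      rw [this]
      have h9 : (2:ℕ)^(β+2) = 2 * 2^(β+1) := by ring
      rw [h9]
      exact mul_dvd_mul_left 2 hk
  set p := (2:ℕ)^(β+2) with hpdef
  have hp3 : (2:ℕ)^(β+3) = 2 * p := by rw [hpdef]; ring
  rcases hcase with ⟨m', hm'⟩ | ⟨m', hm'⟩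
  · have hle : p * m' < p * 2 := by
      calc p * m' = v - 1 := hm'.symm
        _ < 2^(β+3) := lt_of_le_of_lt (Nat.sub_le v 1) hvlt
        _ = p * 2 := by rw [hp3]; ring
    have hm2 : m' < 2 := lt_of_mul_lt_mul_left hle (Nat.zero_le _)
    interval_cases m'
    · left; rw [← hxv]; congr 1; omega
    · right; right; left; rw [← hxv]; congr 1; omega
  · have hle : p * m' ≤ p * 2 := by
      calc p * m' = v + 1 := hm'.symm
        _ ≤ 2^(β+3) := hvlt
        _ = p * 2 := by rw [hp3]; ring
    have hm2 : m' ≤ 2 := Nat.le_of_mul_le_mul_left hle hppos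
    have hm1 : 1 ≤ m' := by
      rcases Nat.eq_zero_or_pos m' with h | h
      · exfalso; rw [h, mul_zero] at hm'; omega
      · exact h
    interval_cases m'
    · right; right; right; rw [← hxv]; congr 1; omega
    · right; left; rw [← hxv]; congr 1; omega

lemma cast_ne_aux {n a b : ℕ} [NeZero n] (ha : a < n) (hb : b < n) (hne : a ≠ b) :
    (a : ZMod n) ≠ (b : ZMod n) := fun h =>
  hne (by rw [← ZMod.val_cast_of_lt ha, ← ZMod.val_cast_of_lt hb, h])


theorem cl2_two_power_structure (α : ℕ) (hα : 3 ≤ α) (n : ℕ) (hn : n = 2 ^ α) :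
    (∀ v, ((Cl2 (ZMod n)).neighborSet v).ncard ≤ 1) ∧
    (Cl2 (ZMod n)).edgeSet.ncard = (n.totient - 4) / 2 ∧
    {v | (Cl2 (ZMod n)).neighborSet v = ∅}.ncard = 4 := by
  obtain ⟨β, rfl⟩ : ∃ β, α = β + 3 := ⟨α - 3, by omega⟩
  subst hn
  haveI : NeZero (2^(β+3)) := ⟨by positivity⟩
  haveI : Fact (1 < 2^(β+3)) := ⟨by
    have h := Nat.one_le_two_pow (n := β)
    have h2 : (2:ℕ)^(β+3) = 8 * 2^β := by ring
    omega⟩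
  have hb : 1 ≤ 2^β := Nat.one_le_two_pow
  have e8 : (2:ℕ)^(β+3) = 8 * 2^β := by ring
  have e4 : (2:ℕ)^(β+2) = 4 * 2^β := by ring
  set G := Cl2 (ZMod (2^(β+3))) with hG
  set d : {e : ZMod (2^(β+3)) // IsIdempotentElem e ∧ e ≠ 0} :=
    ⟨1, IsIdempotentElem.one, one_ne_zero⟩ with hd
  have huniq : ∀ i : {e : ZMod (2^(β+3)) // IsIdempotentElem e ∧ e ≠ 0}, i = d := by
    rintro ⟨e, he, hne⟩
    rcases idem_aux e he with rfl | rfl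
    · exact absurd rfl hne
    · rfl
  have hAdj : ∀ v w, G.Adj v w ↔ (v ≠ w ∧
      (((v.1 : ZMod (2^(β+3))) * (w.1 : ZMod (2^(β+3))) = 0) ∨
       ((v.2 : ZMod (2^(β+3))) * (w.2 : ZMod (2^(β+3))) = 1))) := fun v w => Iff.rfl
  have hadj : ∀ v w, G.Adj v w ↔ v.2 ≠ w.2 ∧ v.2 * w.2 = 1 := by
    intro v w
    rw [hAdj]
    constructor
    · rintro ⟨hne, h | h⟩
      · exfalso
        rw [huniq v.1, huniq w.1] at h
        simp [hd] at h
      · refine ⟨?_, Units.ext (by simpa using h)⟩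
        intro h2
        exact hne (Prod.ext ((huniq v.1).trans (huniq w.1).symm) h2)
    · rintro ⟨hne, hmul⟩
      refine ⟨fun h2 => hne (congrArg Prod.snd h2), Or.inr ?_⟩
      have := congrArg Units.val hmul
      simpa using this
  -- neighbor sets
  have hsub : ∀ v, G.neighborSet v ⊆ {(d, v.2⁻¹)} := by
    intro v w hw
    rw [SimpleGraph.mem_neighborSet, hadj] at hw
    obtain ⟨hne, hmul⟩ := hw
    have h2 : w.2 = v.2⁻¹ := (inv_eq_of_mul_eq_one_right hmul).symm
    exact Set.mem_singleton_iff.mpr (Prod.ext (huniq w.1) h2)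
  have part1 : ∀ v, (G.neighborSet v).ncard ≤ 1 := fun v =>
    le_trans (Set.ncard_le_ncard (hsub v) (Set.finite_singleton _))
      (le_of_eq (Set.ncard_singleton _))
  have hsingle : ∀ v, ¬(v.2 * v.2 = 1) → G.neighborSet v = {(d, v.2⁻¹)} := by
    intro v h
    refine Set.Subset.antisymm (hsub v) ?_
    rintro w rfl
    rw [SimpleGraph.mem_neighborSet, hadj]
    refine ⟨?_, ?_⟩
    · intro he
      apply h
      nth_rewrite 2 [he]
      simp
    · simp
  have hiso : ∀ v, G.neighborSet v = ∅ ↔ v.2 * v.2 = 1 := by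
    intro v
    constructor
    · intro h
      by_contra hne
      have hmem : (d, v.2⁻¹) ∈ G.neighborSet v := by
        rw [hsingle v hne]; exact rfl
      rw [h] at hmem
      exact hmem
    · intro h
      ext w
      simp only [SimpleGraph.mem_neighborSet, Set.mem_empty_iff_false, iff_false]
      rw [hadj]
      rintro ⟨hne, hmul⟩
      exact hne (mul_left_cancel (h.trans hmul.symm))
  -- the four self-inverse units
  have hcast2 : ((2^(β+3) : ℕ) : ZMod (2^(β+3))) = 0 := ZMod.natCast_self _
  have hc2 : ((2^(β+2) : ℕ) : ZMod (2^(β+3))) * ((2^(β+2) : ℕ) : ZMod (2^(β+3))) = 0 := by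
    rw [← Nat.cast_mul]
    have : (2:ℕ)^(β+2) * 2^(β+2) = 2^(β+3) * 2^(β+1) := by ring
    rw [this, Nat.cast_mul, hcast2, zero_mul]
  have h2c : ((2^(β+2) : ℕ) : ZMod (2^(β+3))) + ((2^(β+2) : ℕ) : ZMod (2^(β+3))) = 0 := by
    rw [← Nat.cast_add]
    have : (2:ℕ)^(β+2) + 2^(β+2) = 2^(β+3) := by ring
    rw [this, hcast2]
  have hm1 : ((2^(β+3) - 1 : ℕ) : ZMod (2^(β+3))) = -1 := by
    rw [Nat.cast_sub (by omega), hcast2, Nat.cast_one, zero_sub]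
  have hcm1 : ((2^(β+2) - 1 : ℕ) : ZMod (2^(β+3))) =
      ((2^(β+2) : ℕ) : ZMod (2^(β+3))) - 1 := by
    rw [Nat.cast_sub (by omega), Nat.cast_one]
  have hcp1 : ((2^(β+2) + 1 : ℕ) : ZMod (2^(β+3))) =
      ((2^(β+2) : ℕ) : ZMod (2^(β+3))) + 1 := by push_cast; ring
  have s1 : ((1:ℕ) : ZMod (2^(β+3))) * ((1:ℕ) : ZMod (2^(β+3))) = 1 := by
    rw [Nat.cast_one, mul_one]
  have s2 : ((2^(β+3) - 1 : ℕ) : ZMod (2^(β+3))) * ((2^(β+3) - 1 : ℕ) : ZMod (2^(β+3))) = 1 := by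
    rw [hm1]; ring
  have s3 : ((2^(β+2) + 1 : ℕ) : ZMod (2^(β+3))) * ((2^(β+2) + 1 : ℕ) : ZMod (2^(β+3))) = 1 := by
    rw [hcp1]; linear_combination hc2 + h2c
  have s4 : ((2^(β+2) - 1 : ℕ) : ZMod (2^(β+3))) * ((2^(β+2) - 1 : ℕ) : ZMod (2^(β+3))) = 1 := by
    rw [hcm1]; linear_combination hc2 - h2c
  set u1 := Units.mkOfMulEqOne _ _ s1 with hu1
  set u2 := Units.mkOfMulEqOne _ _ s2 with hu2
  set u3 := Units.mkOfMulEqOne _ _ s3 with hu3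
  set u4 := Units.mkOfMulEqOne _ _ s4 with hu4
  have hval1 : (u1 : ZMod (2^(β+3))) = ((1:ℕ) : ZMod (2^(β+3))) := by
    rw [hu1, Units.val_mkOfMulEqOne]
  have hval2 : (u2 : ZMod (2^(β+3))) = ((2^(β+3) - 1 : ℕ) : ZMod (2^(β+3))) := by
    rw [hu2, Units.val_mkOfMulEqOne]
  have hval3 : (u3 : ZMod (2^(β+3))) = ((2^(β+2) + 1 : ℕ) : ZMod (2^(β+3))) := by
    rw [hu3, Units.val_mkOfMulEqOne]
  have hval4 : (u4 : ZMod (2^(β+3))) = ((2^(β+2) - 1 : ℕ) : ZMod (2^(β+3))) := by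
    rw [hu4, Units.val_mkOfMulEqOne]
  -- distinctness
  have hne12 : u1 ≠ u2 := by
    intro h; have h' := congrArg Units.val h; rw [hval1, hval2] at h'
    exact cast_ne_aux (by omega) (by omega) (by omega) h'
  have hne13 : u1 ≠ u3 := by
    intro h; have h' := congrArg Units.val h; rw [hval1, hval3] at h'
    exact cast_ne_aux (by omega) (by omega) (by omega) h'
  have hne14 : u1 ≠ u4 := by
    intro h; have h' := congrArg Units.val h; rw [hval1, hval4] at h'
    exact cast_ne_aux (by omega) (by omega) (by omega) h'
  have hne23 : u2 ≠ u3 := by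
    intro h; have h' := congrArg Units.val h; rw [hval2, hval3] at h'
    exact cast_ne_aux (by omega) (by omega) (by omega) h'
  have hne24 : u2 ≠ u4 := by
    intro h; have h' := congrArg Units.val h; rw [hval2, hval4] at h'
    exact cast_ne_aux (by omega) (by omega) (by omega) h'
  have hne34 : u3 ≠ u4 := by
    intro h; have h' := congrArg Units.val h; rw [hval3, hval4] at h'
    exact cast_ne_aux (by omega) (by omega) (by omega) h'
  -- the set of self-inverse vertices
  have hS : {v : {e : ZMod (2^(β+3)) // IsIdempotentElem e ∧ e ≠ 0} × (ZMod (2^(β+3)))ˣ |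
      v.2 * v.2 = 1} = {(d, u1), (d, u2), (d, u3), (d, u4)} := by
    ext v
    simp only [Set.mem_setOf_eq, Set.mem_insert_iff, Set.mem_singleton_iff]
    constructor
    · intro h
      have hval : (v.2 : ZMod (2^(β+3))) * (v.2 : ZMod (2^(β+3))) = 1 := by
        have := congrArg Units.val h
        simpa using this
      rcases classify_aux _ hval with h1 | h1 | h1 | h1
      · exact Or.inl (Prod.ext (huniq v.1) (Units.ext (by rw [hval1]; exact h1)))
      · exact Or.inr (Or.inl (Prod.ext (huniq v.1) (Units.ext (by rw [hval2]; exact h1))))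
      · exact Or.inr (Or.inr (Or.inl (Prod.ext (huniq v.1) (Units.ext (by rw [hval3]; exact h1)))))
      · exact Or.inr (Or.inr (Or.inr (Prod.ext (huniq v.1) (Units.ext (by rw [hval4]; exact h1)))))
    · rintro (rfl | rfl | rfl | rfl)
      · exact Units.ext (by rw [Units.val_mul, Units.val_one, hval1]; exact s1)
      · exact Units.ext (by rw [Units.val_mul, Units.val_one, hval2]; exact s2)
      · exact Units.ext (by rw [Units.val_mul, Units.val_one, hval3]; exact s3)
      · exact Units.ext (by rw [Units.val_mul, Units.val_one, hval4]; exact s4)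
  have hcard4 : {v : {e : ZMod (2^(β+3)) // IsIdempotentElem e ∧ e ≠ 0} × (ZMod (2^(β+3)))ˣ |
      v.2 * v.2 = 1}.ncard = 4 := by
    rw [hS]
    rw [Set.ncard_insert_of_notMem (by simp [hne12, hne13, hne14]),
        Set.ncard_insert_of_notMem (by simp [hne23, hne24]),
        Set.ncard_insert_of_notMem (by simp [hne34]),
        Set.ncard_singleton]
  have hsetiso : {v | G.neighborSet v = ∅} =
      {v : {e : ZMod (2^(β+3)) // IsIdempotentElem e ∧ e ≠ 0} × (ZMod (2^(β+3)))ˣ |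
      v.2 * v.2 = 1} := Set.ext fun v => hiso v
  refine ⟨part1, ?_, by rw [hsetiso]; exact hcard4⟩
  -- edge count
  classical
  haveI : Fintype ({e : ZMod (2^(β+3)) // IsIdempotentElem e ∧ e ≠ 0} × (ZMod (2^(β+3)))ˣ) :=
    Fintype.ofFinite _
  have hhs := G.sum_degrees_eq_twice_card_edges
  have hdegn : ∀ v, G.degree v = (G.neighborSet v).ncard := by
    intro v
    have h1 := Nat.card_coe_set_eq (G.neighborSet v)
    rw [Nat.card_eq_fintype_card] at h1
    rw [← SimpleGraph.card_neighborSet_eq_degree, h1]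
  have hsum : ∑ v, G.degree v =
      (Finset.univ.filter (fun v : {e : ZMod (2^(β+3)) // IsIdempotentElem e ∧ e ≠ 0} ×
        (ZMod (2^(β+3)))ˣ => ¬(v.2 * v.2 = 1))).card := by
    rw [Finset.card_filter]
    refine Finset.sum_congr rfl fun v _ => ?_
    by_cases h : v.2 * v.2 = 1
    · rw [hdegn, (hiso v).mpr h, Set.ncard_empty, if_neg (by simpa using h)]
    · rw [hdegn, hsingle v h, Set.ncard_singleton, if_pos h]
  have hfiltcard : (Finset.univ.filter (fun v : {e : ZMod (2^(β+3)) // IsIdempotentElem e ∧ e ≠ 0} ×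
      (ZMod (2^(β+3)))ˣ => v.2 * v.2 = 1)).card = 4 := by
    rw [← hcard4, Set.ncard_eq_toFinset_card', Set.toFinset_setOf]
  have hsplit := Finset.card_filter_add_card_filter_not
    (s := (Finset.univ : Finset ({e : ZMod (2^(β+3)) // IsIdempotentElem e ∧ e ≠ 0} ×
      (ZMod (2^(β+3)))ˣ)))
    (p := fun v => v.2 * v.2 = 1)
  have htot : (Finset.univ : Finset ({e : ZMod (2^(β+3)) // IsIdempotentElem e ∧ e ≠ 0} ×
      (ZMod (2^(β+3)))ˣ)).card = (2^(β+3)).totient := by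
    rw [Finset.card_univ, ← Nat.card_eq_fintype_card, Nat.card_prod]
    haveI : Unique {e : ZMod (2^(β+3)) // IsIdempotentElem e ∧ e ≠ 0} := ⟨⟨d⟩, huniq⟩
    rw [Nat.card_unique, one_mul, Nat.card_eq_fintype_card, ZMod.card_units_eq_totient]
  have hE : G.edgeSet.ncard = G.edgeFinset.card := by
    have h1 := Nat.card_coe_set_eq G.edgeSet
    rw [Nat.card_eq_fintype_card] at h1
    rw [← h1, SimpleGraph.edgeFinset_card]
  have htotle : 4 ≤ (2^(β+3)).totient := by
    rw [← htot, ← hsplit, ← hfiltcard]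
    omega
  rw [hE]
  omega
end

section
/- Let p and q be distinct primes, α and β positive integers, and n = p^α q^β. Then in the graph Cl₂(ℤ_n), for every unit u of ℤ_n, the degree of the vertex (1, u) equals 2 if u² = 1, and equals 3 if u² ≠ 1. -/
lemma unit_idem {R : Type*} [CommRing R] {e : R} (hu : IsUnit e)
    (he : IsIdempotentElem e) : e = 1 :=
  hu.mul_left_cancel (by rw [mul_one]; exact he)

lemma idem_primepow {p α : ℕ} (hp : p.Prime) (hα : 0 < α) (e : ZMod (p ^ α))
    (he : IsIdempotentElem e) : e = 0 ∨ e = 1 := by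
  haveI : Fact p.Prime := ⟨hp⟩
  haveI : NeZero (p ^ α) := ⟨pow_ne_zero _ hp.pos.ne'⟩
  set φ := ZMod.castHom (dvd_pow_self p hα.ne') (ZMod p) with hφ
  have hunit : ∀ f : ZMod (p ^ α), φ f = 1 → IsUnit f := by
    intro f hf
    have hv : ((f.val : ℕ) : ZMod (p ^ α)) = f := ZMod.natCast_rightInverse f
    have hφv : φ f = ((f.val : ℕ) : ZMod p) := by
      conv_lhs => rw [← hv]
      simp [hφ]
    have hpdvd : ¬ p ∣ f.val := by
      intro hd
      rw [hφv, (ZMod.natCast_eq_zero_iff _ _).2 hd] at hf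
      exact one_ne_zero hf.symm
    rw [← hv]
    exact (ZMod.isUnit_iff_coprime _ _).2
      (Nat.Coprime.pow_right _ ((Nat.coprime_comm).1 (hp.coprime_iff_not_dvd.2 hpdvd)))
  have hφe : IsIdempotentElem (φ e) := he.map φ
  rcases IsIdempotentElem.iff_eq_zero_or_one.1 hφe with h0 | h1
  · left
    have : φ (1 - e) = 1 := by rw [map_sub, map_one, h0, sub_zero]
    have := unit_idem (hunit _ this) he.one_sub
    linear_combination -this
  · right; exact unit_idem (hunit _ h1) he

lemma idem_classify {p q α β : ℕ} (hp : p.Prime) (hq : q.Prime) (hpq : p ≠ q)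
    (hα : 0 < α) (hβ : 0 < β) {n : ℕ} (hn : n = p ^ α * q ^ β) :
    ∃ a b : ZMod n, a ≠ b ∧ a ≠ 1 ∧ b ≠ 1 ∧ a ≠ 0 ∧ b ≠ 0 ∧
      IsIdempotentElem a ∧ IsIdempotentElem b ∧
      (∀ e : ZMod n, IsIdempotentElem e ∧ e ≠ 0 ↔ e = 1 ∨ e = a ∨ e = b) := by
  subst hn
  have hco : Nat.Coprime (p ^ α) (q ^ β) := Nat.Coprime.pow _ _ ((Nat.coprime_primes hp hq).2 hpq)
  haveI : NeZero (p ^ α) := ⟨pow_ne_zero _ hp.pos.ne'⟩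
  haveI : NeZero (q ^ β) := ⟨pow_ne_zero _ hq.pos.ne'⟩
  haveI : Fact (1 < p ^ α) := ⟨Nat.one_lt_pow hα.ne' hp.one_lt⟩
  haveI : Fact (1 < q ^ β) := ⟨Nat.one_lt_pow hβ.ne' hq.one_lt⟩
  haveI : Fact (1 < p ^ α * q ^ β) :=
    ⟨lt_of_lt_of_le (Nat.one_lt_pow hα.ne' hp.one_lt)
      (Nat.le_mul_of_pos_right _ (pow_pos hq.pos β))⟩
  set σ := ZMod.chineseRemainder hco with hσ
  refine ⟨σ.symm (1, 0), σ.symm (0, 1), ?_, ?_, ?_, ?_, ?_, ?_, ?_, ?_⟩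
  · intro h; have := σ.symm.injective h; simp [Prod.ext_iff] at this
  · intro h
    have : σ.symm (1, 0) = σ.symm 1 := by rw [h, map_one]
    have := σ.symm.injective this; simp [Prod.ext_iff] at this
  · intro h
    have : σ.symm (0, 1) = σ.symm 1 := by rw [h, map_one]
    have := σ.symm.injective this; simp [Prod.ext_iff] at this
  · intro h
    have : σ.symm (1, 0) = σ.symm 0 := by rw [h, map_zero]
    have := σ.symm.injective this; simp [Prod.ext_iff] at this
  · intro h
    have : σ.symm (0, 1) = σ.symm 0 := by rw [h, map_zero]
    have := σ.symm.injective this; simp [Prod.ext_iff] at this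
  · show _ * _ = _
    rw [← map_mul]; norm_num
  · show _ * _ = _
    rw [← map_mul]; norm_num
  · intro e
    constructor
    · rintro ⟨he, he0⟩
      have h1 : IsIdempotentElem (σ e).1 := congrArg Prod.fst (he.map σ.toRingHom)
      have h2 : IsIdempotentElem (σ e).2 := congrArg Prod.snd (he.map σ.toRingHom)
      have heq : e = σ.symm (σ e) := (σ.symm_apply_apply e).symm
      rcases idem_primepow hp hα _ h1 with ha | ha <;>
        rcases idem_primepow hq hβ _ h2 with hb | hb
      · exfalso; apply he0
        rw [heq, ← Prod.mk.eta (p := σ e), ha, hb, ← map_zero σ.symm]; rfl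
      · right; right; rw [heq, ← Prod.mk.eta (p := σ e), ha, hb]
      · right; left; rw [heq, ← Prod.mk.eta (p := σ e), ha, hb]
      · left; rw [heq, ← Prod.mk.eta (p := σ e), ha, hb, ← map_one σ.symm]; rfl
    · rintro (rfl | rfl | rfl)
      · exact ⟨mul_one 1, one_ne_zero⟩
      · refine ⟨?_, ?_⟩
        · show _ * _ = _; rw [← map_mul]; norm_num
        · intro h
          have : σ.symm (1, 0) = σ.symm 0 := by rw [h, map_zero]
          have := σ.symm.injective this; simp [Prod.ext_iff] at this
      · refine ⟨?_, ?_⟩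
        · show _ * _ = _; rw [← map_mul]; norm_num
        · intro h
          have : σ.symm (0, 1) = σ.symm 0 := by rw [h, map_zero]
          have := σ.symm.injective this; simp [Prod.ext_iff] at this



theorem cl2_two_prime_powers_degree_one (p q : ℕ) (hp : p.Prime) (hq : q.Prime)
    (hpq : p ≠ q) (α β : ℕ) (hα : 0 < α) (hβ : 0 < β) (n : ℕ) (hn : n = p ^ α * q ^ β)
    (u : (ZMod n)ˣ) (h1 : IsIdempotentElem (1 : ZMod n) ∧ (1 : ZMod n) ≠ 0) :
    (u ^ 2 = 1 → ((Cl2 (ZMod n)).neighborSet (⟨1, h1⟩, u)).ncard = 2) ∧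
    (u ^ 2 ≠ 1 → ((Cl2 (ZMod n)).neighborSet (⟨1, h1⟩, u)).ncard = 3) := by
  obtain ⟨a, b, hab, ha1, hb1, ha0, hb0, hai, hbi, hcl⟩ :=
    idem_classify hp hq hpq hα hβ hn
  set E1 : {e : ZMod n // IsIdempotentElem e ∧ e ≠ 0} := ⟨1, h1⟩ with hE1
  set Ea : {e : ZMod n // IsIdempotentElem e ∧ e ≠ 0} := ⟨a, hai, ha0⟩ with hEa
  set Eb : {e : ZMod n // IsIdempotentElem e ∧ e ≠ 0} := ⟨b, hbi, hb0⟩ with hEb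
  have hE1a : E1 ≠ Ea := fun h => ha1 (congrArg Subtype.val h).symm
  have hE1b : E1 ≠ Eb := fun h => hb1 (congrArg Subtype.val h).symm
  have hEab : Ea ≠ Eb := fun h => hab (congrArg Subtype.val h)
  have hN : ∀ w, w ∈ (Cl2 (ZMod n)).neighborSet (E1, u) ↔
      (w ≠ (E1, u) ∧ w.2 = u⁻¹) := by
    rintro ⟨⟨f, hf, hf0⟩, v⟩
    simp only [SimpleGraph.mem_neighborSet]
    show ((E1, u) ≠ _ ∧ ((1 : ZMod n) * f = 0 ∨ (u : ZMod n) * (v : ZMod n) = 1)) ↔ _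
    constructor
    · rintro ⟨hne, h | h⟩
      · exact absurd (by rwa [one_mul] at h) hf0
      · refine ⟨Ne.symm hne, ?_⟩
        have huv : u * v = 1 := Units.ext (by rw [Units.val_mul]; exact h)
        exact (inv_eq_of_mul_eq_one_right huv).symm
    · rintro ⟨hne, hv⟩
      refine ⟨Ne.symm hne, Or.inr ?_⟩
      have : u * v = 1 := by rw [hv, mul_inv_cancel]
      rw [← Units.val_mul, this, Units.val_one]
  constructor
  · intro hu2
    have hu : u⁻¹ = u := inv_eq_of_mul_eq_one_right (by rw [← sq]; exact hu2)
    have hset : (Cl2 (ZMod n)).neighborSet (E1, u) = {(Ea, u⁻¹), (Eb, u⁻¹)} := by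
      ext w
      rw [hN]
      constructor
      · rintro ⟨hne, h2⟩
        have hw : w = (w.1, u⁻¹) := Prod.ext rfl h2
        rcases (hcl w.1.1).1 w.1.2 with h | h | h
        · exfalso; apply hne
          rw [hw, hu]
          exact Prod.ext (Subtype.ext h) rfl
        · left; rw [hw]; exact Prod.ext (Subtype.ext h) rfl
        · right; rw [hw]; exact Prod.ext (Subtype.ext h) rfl
      · rintro (rfl | rfl)
        · exact ⟨fun h => hE1a.symm (congrArg Prod.fst h), rfl⟩
        · exact ⟨fun h => hE1b.symm (congrArg Prod.fst h), rfl⟩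
    rw [hset, Set.ncard_pair (fun h => hEab (congrArg Prod.fst h))]
  · intro hu2
    have hu : ∀ v, v = u⁻¹ → v ≠ u := by
      rintro v rfl h
      exact hu2 (by rw [sq]; nth_rewrite 2 [← h]; rw [mul_inv_cancel])
    have hset : (Cl2 (ZMod n)).neighborSet (E1, u) =
        {(E1, u⁻¹), (Ea, u⁻¹), (Eb, u⁻¹)} := by
      ext w
      rw [hN]
      constructor
      · rintro ⟨hne, h2⟩
        have hw : w = (w.1, u⁻¹) := Prod.ext rfl h2
        rcases (hcl w.1.1).1 w.1.2 with h | h | h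
        · left; rw [hw]; exact Prod.ext (Subtype.ext h) rfl
        · right; left; rw [hw]; exact Prod.ext (Subtype.ext h) rfl
        · right; right; rw [hw]; exact Prod.ext (Subtype.ext h) rfl
      · have key : ∀ E : {e : ZMod n // IsIdempotentElem e ∧ e ≠ 0},
            (E, u⁻¹) ≠ (E1, u) := by
          intro E h
          exact hu u⁻¹ rfl (congrArg Prod.snd h)
        rintro (rfl | rfl | rfl) <;> exact ⟨key _, rfl⟩
    rw [hset]
    rw [Set.ncard_insert_of_notMem (by
      simp only [Set.mem_insert_iff, Set.mem_singleton_iff]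
      rintro (h | h)
      · exact hE1a (congrArg Prod.fst h)
      · exact hE1b (congrArg Prod.fst h))]
    rw [Set.ncard_pair (fun h => hEab (congrArg Prod.fst h))]
end

section
/- Let p and q be distinct primes, α and β positive integers, and n = p^α q^β. Then in the graph Cl₂(ℤ_n), for every idempotent e of ℤ_n with e ≠ 0 and e ≠ 1 and every unit u of ℤ_n, the degree of the vertex (e, u) equals 1 + φ(n) if u² = 1, and equals 2 + φ(n) if u² ≠ 1, where φ is Euler's totient function. -/
lemma zmod_prime_pow_idem {p k : ℕ} (hp : p.Prime) (hk : 0 < k)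
    (f : ZMod (p ^ k)) (hf : IsIdempotentElem f) : f = 0 ∨ f = 1 := by
  haveI : Fact p.Prime := ⟨hp⟩
  haveI : NeZero (p ^ k) := ⟨pow_ne_zero _ hp.pos.ne'⟩
  let g : ZMod (p ^ k) →+* ZMod p := ZMod.castHom (dvd_pow_self p hk.ne') (ZMod p)
  have hnu : ∀ x : ZMod (p ^ k), ¬ IsUnit x → g x = 0 := by
    intro x hx
    have hco : ¬ Nat.Coprime x.val (p ^ k) := by
      intro hc
      exact hx (by
        have := (ZMod.isUnit_iff_coprime x.val (p ^ k)).mpr hc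
        rwa [ZMod.natCast_rightInverse x] at this)
    have hdvd : p ∣ x.val := by
      by_contra hd
      exact hco ((Nat.coprime_pow_right_iff hk _ _).mpr
        (Nat.coprime_comm.mp (hp.coprime_iff_not_dvd.mpr hd)))
    have : (x.val : ZMod p) = 0 := (ZMod.natCast_eq_zero_iff _ _).mpr hdvd
    rw [ZMod.natCast_val] at this
    exact this
  by_cases hu : IsUnit f
  · right; exact hu.mul_left_cancel (by rw [mul_one]; exact hf)
  · by_cases hu' : IsUnit (1 - f)
    · left
      have h0 : f * (1 - f) = 0 := by
        rw [mul_sub, mul_one, hf.eq, sub_self]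
      exact hu'.mul_left_cancel (a := 1 - f) (b := f) (c := 0)
        (by rw [mul_zero, mul_comm]; exact h0)
    · exfalso
      have h1 := hnu f hu
      have h2 := hnu (1 - f) hu'
      rw [map_sub, map_one, h1, sub_zero] at h2
      exact one_ne_zero h2

lemma idem_cases {p q α β : ℕ} (hp : p.Prime) (hq : q.Prime) (hpq : p ≠ q)
    (hα : 0 < α) (hβ : 0 < β) (e f : ZMod (p ^ α * q ^ β)) (he : IsIdempotentElem e)
    (he0 : e ≠ 0) (he1 : e ≠ 1) (hf : IsIdempotentElem f) :
    f = 0 ∨ f = 1 ∨ f = e ∨ f = 1 - e := by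
  have hcop : Nat.Coprime (p ^ α) (q ^ β) :=
    Nat.Coprime.pow α β ((Nat.coprime_primes hp hq).mpr hpq)
  set φ := ZMod.chineseRemainder hcop with hφ
  have hinj : Function.Injective φ := φ.injective
  have key : ∀ x : ZMod (p ^ α * q ^ β), IsIdempotentElem x →
      ((φ x).1 = 0 ∨ (φ x).1 = 1) ∧ ((φ x).2 = 0 ∨ (φ x).2 = 1) := by
    intro x hx
    have h1 : (φ x) * (φ x) = φ x := by rw [← map_mul, hx.eq]
    exact ⟨zmod_prime_pow_idem hp hα (φ x).1 (congrArg Prod.fst h1),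
      zmod_prime_pow_idem hq hβ (φ x).2 (congrArg Prod.snd h1)⟩
  obtain ⟨ha, hb⟩ := key e he
  obtain ⟨hc, hd⟩ := key f hf
  have h0 : (φ f).1 = 0 → (φ f).2 = 0 → f = 0 := fun h h' =>
    hinj (by rw [map_zero]; exact Prod.ext h h')
  have h1 : (φ f).1 = 1 → (φ f).2 = 1 → f = 1 := fun h h' =>
    hinj (by rw [map_one]; exact Prod.ext h h')
  have h2 : (φ f).1 = (φ e).1 → (φ f).2 = (φ e).2 → f = e := fun h h' =>
    hinj (Prod.ext h h')
  have h3 : (φ f).1 = 1 - (φ e).1 → (φ f).2 = 1 - (φ e).2 → f = 1 - e := fun h h' =>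
    hinj (by rw [map_sub, map_one]; exact Prod.ext h h')
  have he0' : ¬ ((φ e).1 = 0 ∧ (φ e).2 = 0) := by
    rintro ⟨h, h'⟩
    exact he0 (hinj (by rw [map_zero]; exact Prod.ext h h'))
  have he1' : ¬ ((φ e).1 = 1 ∧ (φ e).2 = 1) := by
    rintro ⟨h, h'⟩
    exact he1 (hinj (by rw [map_one]; exact Prod.ext h h'))
  rcases ha with ha | ha <;> rcases hb with hb | hb <;>
    rcases hc with hc | hc <;> rcases hd with hd | hd <;>
    first
    | exact absurd (⟨ha, hb⟩ : _ ∧ _) he0'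
    | exact absurd (⟨ha, hb⟩ : _ ∧ _) he1'
    | exact Or.inl (h0 hc hd)
    | exact Or.inr (Or.inl (h1 hc hd))
    | exact Or.inr (Or.inr (Or.inl (h2 (hc.trans ha.symm) (hd.trans hb.symm))))
    | exact Or.inr (Or.inr (Or.inr (h3 (by rw [hc, ha]; ring) (by rw [hd, hb]; ring))))

theorem cl2_two_prime_powers_degree_nontrivial (p q : ℕ) (hp : p.Prime) (hq : q.Prime)
    (hpq : p ≠ q) (α β : ℕ) (hα : 0 < α) (hβ : 0 < β) (n : ℕ) (hn : n = p ^ α * q ^ β)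
    (e : ZMod n) (he : IsIdempotentElem e) (he0 : e ≠ 0) (he1 : e ≠ 1)
    (u : (ZMod n)ˣ) :
    (u ^ 2 = 1 →
      ((Cl2 (ZMod n)).neighborSet (⟨e, he, he0⟩, u)).ncard = 1 + n.totient) ∧
    (u ^ 2 ≠ 1 →
      ((Cl2 (ZMod n)).neighborSet (⟨e, he, he0⟩, u)).ncard = 2 + n.totient) := by
  subst hn
  haveI : Fact p.Prime := ⟨hp⟩
  haveI : Fact q.Prime := ⟨hq⟩
  haveI : NeZero (p ^ α * q ^ β) := ⟨Nat.mul_ne_zero (pow_ne_zero _ hp.pos.ne') (pow_ne_zero _ hq.pos.ne')⟩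
  haveI : Fact (1 < p ^ α * q ^ β) := ⟨by
    have h1 : 2 ≤ p ^ α := hp.two_le.trans (Nat.le_self_pow hα.ne' p)
    have h2 : 1 ≤ q ^ β := Nat.one_le_pow _ _ hq.pos
    nlinarith⟩
  -- basic facts
  have h1e : IsIdempotentElem (1 - e) := he.one_sub
  have h1e0 : (1 : ZMod (p ^ α * q ^ β)) - e ≠ 0 := fun h =>
    he1 ((sub_eq_zero.mp h).symm)
  have hee : e * (1 - e) = 0 := by rw [mul_sub, mul_one, he.eq, sub_self]
  have hte : (1 : ZMod (p ^ α * q ^ β)) - e ≠ e := by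
    intro h
    apply he0
    have h' := hee
    rw [h, he.eq] at h'
    exact h'
  have hoe : (1 : ZMod (p ^ α * q ^ β)) ≠ e := fun h => he1 h.symm
  have hot : (1 : ZMod (p ^ α * q ^ β)) ≠ 1 - e := fun h =>
    he0 (sub_eq_self.mp h.symm)
  set s : ({x : ZMod (p ^ α * q ^ β) // IsIdempotentElem x ∧ x ≠ 0}) := ⟨e, he, he0⟩ with hsdef
  set t : ({x : ZMod (p ^ α * q ^ β) // IsIdempotentElem x ∧ x ≠ 0}) := ⟨1 - e, h1e, h1e0⟩ with htdef
  set o : ({x : ZMod (p ^ α * q ^ β) // IsIdempotentElem x ∧ x ≠ 0}) :=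
    ⟨1, IsIdempotentElem.one, one_ne_zero⟩ with hodef
  have hcard_prod :
      (({t} : Set _) ×ˢ (Set.univ : Set (ZMod (p ^ α * q ^ β))ˣ)).ncard
        = (p ^ α * q ^ β).totient := by
    rw [Set.singleton_prod,
      Set.ncard_image_of_injective _
        (fun a b h => by simpa using congrArg Prod.snd h),
      Set.ncard_univ, Nat.card_eq_fintype_card, ZMod.card_units_eq_totient]
  have adj_iff : ∀ f w, (Cl2 (ZMod (p ^ α * q ^ β))).Adj (s, u) (f, w) ↔
      ((s, u) ≠ (f, w) ∧ (e * (f : ZMod (p ^ α * q ^ β)) = 0 ∨ (u : ZMod (p ^ α * q ^ β)) * (w : ZMod (p ^ α * q ^ β)) = 1)) :=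
    fun f w => Iff.rfl
  have classify := fun (f : ZMod (p ^ α * q ^ β)) hf =>
    idem_cases hp hq hpq hα hβ e f he he0 he1 hf
  have hnot_ot : (o, u⁻¹) ∉ (({t} : Set _) ×ˢ (Set.univ : Set (ZMod (p ^ α * q ^ β))ˣ)) := by
    rintro ⟨hm, -⟩
    exact hot (congrArg Subtype.val (Set.mem_singleton_iff.mp hm))
  constructor
  · -- u ^ 2 = 1
    intro hu2
    have huu : u⁻¹ = u := inv_eq_iff_mul_eq_one.mpr (by rw [← sq]; exact hu2)
    have hset : (Cl2 (ZMod (p ^ α * q ^ β))).neighborSet (s, u)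
        = insert (o, u⁻¹) (({t} : Set _) ×ˢ Set.univ) := by
      ext ⟨f, w⟩
      simp only [SimpleGraph.mem_neighborSet, Set.mem_insert_iff, Set.mem_prod,
        Set.mem_singleton_iff, Set.mem_univ, and_true, Prod.mk.injEq]
      rw [adj_iff]
      constructor
      · rintro ⟨hne, hc | hc⟩
        · right
          rcases classify f.1 f.2.1 with h | h | h | h
          · exact absurd h f.2.2
          · exact absurd (by rw [h, mul_one] at hc; exact hc) he0
          · exact absurd (by rw [h, he.eq] at hc; exact hc) he0
          · exact Subtype.ext h
        · have hw : w = u⁻¹ := (inv_eq_of_mul_eq_one_right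
            (Units.ext (by rw [Units.val_mul, Units.val_one]; exact hc))).symm
          rcases classify f.1 f.2.1 with h | h | h | h
          · exact absurd h f.2.2
          · exact Or.inl ⟨Subtype.ext h, hw⟩
          · exact absurd (Prod.ext (Subtype.ext h.symm) (by rw [hw, huu])) hne
          · exact Or.inr (Subtype.ext h)
      · rintro (⟨hf, hw⟩ | hf)
        · subst hf; subst hw
          exact ⟨fun hcon => hoe (congrArg (fun x => (x.1 : _).1) hcon).symm,
            Or.inr u.mul_inv⟩
        · subst hf
          exact ⟨fun hcon => hte (congrArg (fun x => (x.1 : _).1) hcon).symm,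
            Or.inl hee⟩
    rw [hset, Set.ncard_insert_of_notMem hnot_ot (Set.toFinite _), hcard_prod]
    omega
  · -- u ^ 2 ≠ 1
    intro hu2
    have huu : u⁻¹ ≠ u := fun h =>
      hu2 (by rw [sq]; exact inv_eq_iff_mul_eq_one.mp h)
    have hset : (Cl2 (ZMod (p ^ α * q ^ β))).neighborSet (s, u)
        = insert (s, u⁻¹) (insert (o, u⁻¹) (({t} : Set _) ×ˢ Set.univ)) := by
      ext ⟨f, w⟩
      simp only [SimpleGraph.mem_neighborSet, Set.mem_insert_iff, Set.mem_prod,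
        Set.mem_singleton_iff, Set.mem_univ, and_true, Prod.mk.injEq]
      rw [adj_iff]
      constructor
      · rintro ⟨hne, hc | hc⟩
        · right; right
          rcases classify f.1 f.2.1 with h | h | h | h
          · exact absurd h f.2.2
          · exact absurd (by rw [h, mul_one] at hc; exact hc) he0
          · exact absurd (by rw [h, he.eq] at hc; exact hc) he0
          · exact Subtype.ext h
        · have hw : w = u⁻¹ := (inv_eq_of_mul_eq_one_right
            (Units.ext (by rw [Units.val_mul, Units.val_one]; exact hc))).symm
          rcases classify f.1 f.2.1 with h | h | h | h
          · exact absurd h f.2.2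
          · exact Or.inr (Or.inl ⟨Subtype.ext h, hw⟩)
          · exact Or.inl ⟨Subtype.ext h, hw⟩
          · exact Or.inr (Or.inr (Subtype.ext h))
      · rintro (⟨hf, hw⟩ | ⟨hf, hw⟩ | hf)
        · subst hf; subst hw
          exact ⟨fun hcon => huu (congrArg Prod.snd hcon).symm,
            Or.inr u.mul_inv⟩
        · subst hf; subst hw
          exact ⟨fun hcon => hoe (congrArg (fun x => (x.1 : _).1) hcon).symm,
            Or.inr u.mul_inv⟩
        · subst hf
          exact ⟨fun hcon => hte (congrArg (fun x => (x.1 : _).1) hcon).symm,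
            Or.inl hee⟩
    have hnot_s : (s, u⁻¹) ∉ insert (o, u⁻¹) (({t} : Set _) ×ˢ
        (Set.univ : Set (ZMod (p ^ α * q ^ β))ˣ)) := by
      rintro (hm | ⟨hm, -⟩)
      · exact hoe (congrArg (fun x => (x.1 : _).1) hm).symm
      · exact hte (congrArg Subtype.val (Set.mem_singleton_iff.mp hm)).symm
    rw [hset, Set.ncard_insert_of_notMem hnot_s (Set.Finite.insert _ (Set.toFinite _)),
      Set.ncard_insert_of_notMem hnot_ot (Set.toFinite _), hcard_prod]
    omega
end

section
/- Let n = p₁^{α₁} · … · p_k^{α_k} with k ≥ 2, where p₁, …, p_k are distinct primes and α₁, …, α_k are positive integers. Then in the graph Cl₂(ℤ_n), for every unit u of ℤ_n, the degree of the vertex (1, u) equals 2^k − 2 if u² = 1, and equals 2^k − 1 if u² ≠ 1. -/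
/-- In `ZMod (q ^ β)` with `q` prime and `β > 0`, every idempotent is `0` or `1`. -/
lemma zmod_prime_pow_idem_s11 (q β : ℕ) (hq : q.Prime) (hβ : 0 < β) (x : ZMod (q ^ β))
    (hx : IsIdempotentElem x) : x = 0 ∨ x = 1 := by
  haveI : Fact q.Prime := ⟨hq⟩
  haveI : NeZero (q ^ β) := ⟨pow_ne_zero _ hq.pos.ne'⟩
  have hdvd : q ∣ q ^ β := dvd_pow_self q hβ.ne'
  set ψ : ZMod (q ^ β) →+* ZMod q := ZMod.castHom hdvd (ZMod q) with hψ
  have hunit : ∀ y : ZMod (q ^ β), ψ y ≠ 0 → IsUnit y := by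
    intro y hy
    have h1 : ψ y = ((y.val : ℕ) : ZMod q) := by
      rw [hψ, ZMod.castHom_apply, ← ZMod.natCast_val]
    have h2 : ¬ q ∣ y.val := by
      intro hd
      apply hy
      rw [h1, (ZMod.natCast_eq_zero_iff _ _).mpr hd]
    have h3 : Nat.Coprime y.val (q ^ β) :=
      Nat.Coprime.pow_right _ (Nat.coprime_comm.mp ((Nat.Prime.coprime_iff_not_dvd hq).mpr h2))
    have h4 : IsUnit ((y.val : ℕ) : ZMod (q ^ β)) := (ZMod.isUnit_iff_coprime _ _).mpr h3
    rwa [ZMod.natCast_zmod_val] at h4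
  by_cases h : ψ x = 0
  · left
    have hx' : IsIdempotentElem (1 - x) := hx.one_sub
    have hu : IsUnit (1 - x) := by
      apply hunit
      rw [map_sub, map_one, h, sub_zero]
      exact one_ne_zero
    have : (1 - x) * (1 - x) = (1 - x) * 1 := by rw [hx'.eq, mul_one]
    have := hu.mul_left_cancel this
    linear_combination -this
  · right
    have hu : IsUnit x := hunit x h
    have : x * x = x * 1 := by rw [hx.eq, mul_one]
    exact hu.mul_left_cancel this

/-- The set of idempotents of `ZMod (q ^ β)` is `{0, 1}` for `q` prime, `β > 0`. -/
lemma zmod_prime_pow_idem_card (q β : ℕ) (hq : q.Prime) (hβ : 0 < β) :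
    Nat.card {y : ZMod (q ^ β) // IsIdempotentElem y} = 2 := by
  haveI : Fact (1 < q ^ β) := ⟨Nat.one_lt_pow hβ.ne' hq.one_lt⟩
  have hset : {y : ZMod (q ^ β) | IsIdempotentElem y} = {0, 1} := by
    ext y
    constructor
    · intro hy; exact zmod_prime_pow_idem_s11 q β hq hβ y hy
    · rintro (rfl | rfl)
      · exact IsIdempotentElem.zero
      · exact IsIdempotentElem.one
  have : Nat.card {y : ZMod (q ^ β) // IsIdempotentElem y}
      = ({0, 1} : Set (ZMod (q ^ β))).ncard := by
    rw [← hset]; exact (Nat.card_coe_set_eq _)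
  rw [this, Set.ncard_pair (zero_ne_one (α := ZMod (q ^ β)))]

/-- Counting idempotents of `ZMod n` for `n` a product of `k` prime powers. -/
lemma zmod_idem_card (k : ℕ) (p : Fin k → ℕ) (α : Fin k → ℕ)
    (hp : ∀ i, (p i).Prime) (hinj : Function.Injective p) (hα : ∀ i, 0 < α i) :
    Nat.card {e : ZMod (∏ i, p i ^ α i) // IsIdempotentElem e} = 2 ^ k := by
  have hcop : Pairwise (Function.onFun Nat.Coprime fun i => p i ^ α i) := by
    intro i j hij
    exact Nat.Coprime.pow _ _ (((Nat.coprime_primes (hp i) (hp j)).mpr (fun h => hij (hinj h))))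
  let φ := ZMod.prodEquivPi (fun i => p i ^ α i) hcop
  have E1 : {e : ZMod (∏ i, p i ^ α i) // IsIdempotentElem e}
      ≃ {x : Π i, ZMod (p i ^ α i) // IsIdempotentElem x} :=
    φ.toEquiv.subtypeEquiv (fun e => by
      constructor
      · intro h
        show φ e * φ e = φ e
        rw [← map_mul, h.eq]
      · intro h
        have : φ (e * e) = φ e := by rw [map_mul]; exact h.eq
        exact φ.injective this)
  have E2 : {x : Π i, ZMod (p i ^ α i) // IsIdempotentElem x}
      ≃ {x : Π i, ZMod (p i ^ α i) // ∀ i, IsIdempotentElem (x i)} :=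
    Equiv.subtypeEquivRight (fun x => by
      constructor
      · intro h i; exact congrFun h.eq i
      · intro h; exact funext fun i => (h i).eq)
  have E3 : {x : Π i, ZMod (p i ^ α i) // ∀ i, IsIdempotentElem (x i)}
      ≃ Π i, {y : ZMod (p i ^ α i) // IsIdempotentElem y} := Equiv.subtypePiEquivPi
  rw [Nat.card_congr (E1.trans (E2.trans E3)), Nat.card_pi]
  calc ∏ i, Nat.card {y : ZMod (p i ^ α i) // IsIdempotentElem y}
      = ∏ _i : Fin k, 2 := Finset.prod_congr rfl
        (fun i _ => zmod_prime_pow_idem_card (p i) (α i) (hp i) (hα i))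
    _ = 2 ^ k := by simp

theorem cl2_general_degree_one (k : ℕ) (hk : 2 ≤ k) (p : Fin k → ℕ) (α : Fin k → ℕ)
    (hp : ∀ i, (p i).Prime) (hinj : Function.Injective p) (hα : ∀ i, 0 < α i)
    (n : ℕ) (hn : n = ∏ i, p i ^ α i)
    (u : (ZMod n)ˣ) (h1 : IsIdempotentElem (1 : ZMod n) ∧ (1 : ZMod n) ≠ 0) :
    (u ^ 2 = 1 → ((Cl2 (ZMod n)).neighborSet (⟨1, h1⟩, u)).ncard = 2 ^ k - 2) ∧
    (u ^ 2 ≠ 1 → ((Cl2 (ZMod n)).neighborSet (⟨1, h1⟩, u)).ncard = 2 ^ k - 1) := by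
  haveI : NeZero n := ⟨by
    rw [hn]
    exact Finset.prod_ne_zero_iff.mpr fun i _ => pow_ne_zero _ (hp i).pos.ne'⟩
  have hidem : Nat.card {e : ZMod n // IsIdempotentElem e} = 2 ^ k := by
    subst hn; exact zmod_idem_card k p α hp hinj hα
  -- the set of nonzero idempotents has `2 ^ k - 1` elements
  have hI : Nat.card {e : ZMod n // IsIdempotentElem e ∧ e ≠ 0} = 2 ^ k - 1 := by
    have hset : {e : ZMod n | IsIdempotentElem e ∧ e ≠ 0}
        = {e : ZMod n | IsIdempotentElem e} \ {0} := by
      ext e; simp [and_comm]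
    have h0 : (0 : ZMod n) ∈ {e : ZMod n | IsIdempotentElem e} := IsIdempotentElem.zero
    have := Set.ncard_diff_singleton_of_mem h0
    calc Nat.card {e : ZMod n // IsIdempotentElem e ∧ e ≠ 0}
        = ({e : ZMod n | IsIdempotentElem e ∧ e ≠ 0}).ncard := (Nat.card_coe_set_eq _)
      _ = ({e : ZMod n | IsIdempotentElem e} \ {0}).ncard := by rw [hset]
      _ = ({e : ZMod n | IsIdempotentElem e}).ncard - 1 := this
      _ = 2 ^ k - 1 := by
          have h2 : Nat.card ↥{e : ZMod n | IsIdempotentElem e} = 2 ^ k := hidem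
          rw [← Nat.card_coe_set_eq, h2]
  -- description of the neighbor set
  have hnbhd : (Cl2 (ZMod n)).neighborSet (⟨1, h1⟩, u)
      = {w : {e : ZMod n // IsIdempotentElem e ∧ e ≠ 0} × (ZMod n)ˣ |
          w.2 = u⁻¹ ∧ w ≠ (⟨1, h1⟩, u)} := by
    ext w
    show ((⟨1, h1⟩, u) ≠ w ∧ _) ↔ _
    constructor
    · rintro ⟨hne, h | h⟩
      · exact absurd (by rwa [one_mul] at h) w.1.2.2
      · have : u * w.2 = 1 := Units.ext (by rw [Units.val_mul]; exact h)
        exact ⟨(eq_inv_of_mul_eq_one_left (by rwa [mul_comm] at this)).symm ▸ rfl,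
          Ne.symm hne⟩
    · rintro ⟨hv, hne⟩
      refine ⟨Ne.symm hne, Or.inr ?_⟩
      rw [hv]
      have : u * u⁻¹ = 1 := mul_inv_cancel u
      calc ((u : ZMod n) * ((u⁻¹ : (ZMod n)ˣ) : ZMod n)) = ((u * u⁻¹ : (ZMod n)ˣ) : ZMod n) :=
        (Units.val_mul u u⁻¹).symm
      _ = 1 := by rw [this, Units.val_one]
  -- count a slice `{w | w.2 = v}`
  have hslice : ∀ v : (ZMod n)ˣ,
      ({w : {e : ZMod n // IsIdempotentElem e ∧ e ≠ 0} × (ZMod n)ˣ | w.2 = v}).ncard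
        = 2 ^ k - 1 := by
    intro v
    have E : ↥{w : {e : ZMod n // IsIdempotentElem e ∧ e ≠ 0} × (ZMod n)ˣ | w.2 = v}
        ≃ {e : ZMod n // IsIdempotentElem e ∧ e ≠ 0} :=
      { toFun := fun w => w.1.1
        invFun := fun a => ⟨(a, v), rfl⟩
        left_inv := by rintro ⟨⟨a, b⟩, (rfl : b = v)⟩; rfl
        right_inv := fun a => rfl }
    rw [← Nat.card_coe_set_eq, Nat.card_congr E, hI]
  constructor
  · intro hu2
    have hinv : u⁻¹ = u := by
      rw [inv_eq_iff_mul_eq_one, ← sq, hu2]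
    rw [hnbhd, hinv]
    have hsplit : {w : {e : ZMod n // IsIdempotentElem e ∧ e ≠ 0} × (ZMod n)ˣ |
          w.2 = u ∧ w ≠ (⟨1, h1⟩, u)}
        = {w : {e : ZMod n // IsIdempotentElem e ∧ e ≠ 0} × (ZMod n)ˣ | w.2 = u}
          \ {(⟨1, h1⟩, u)} := by
      ext w; simp [and_comm]
    rw [hsplit, Set.ncard_diff_singleton_of_mem (s := {w : {e : ZMod n // IsIdempotentElem e ∧ e ≠ 0} × (ZMod n)ˣ | w.2 = u}) (by exact rfl), hslice]
    omega
  · intro hu2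
    have hinv : u⁻¹ ≠ u := by
      intro h
      exact hu2 (by rw [sq]; exact inv_eq_iff_mul_eq_one.mp h)
    rw [hnbhd]
    have hsplit : {w : {e : ZMod n // IsIdempotentElem e ∧ e ≠ 0} × (ZMod n)ˣ |
          w.2 = u⁻¹ ∧ w ≠ (⟨1, h1⟩, u)}
        = {w : {e : ZMod n // IsIdempotentElem e ∧ e ≠ 0} × (ZMod n)ˣ | w.2 = u⁻¹} := by
      ext w
      simp only [Set.mem_setOf_eq, and_iff_left_iff_imp]
      intro hw hcontra
      apply hinv
      rw [← hw, hcontra]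
    rw [hsplit, hslice]
end
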